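/- arXiv:1002.2871 — 2 statements merged into one kernel-verified Lean document; each statement's English description precedes it below -/
import Mathlib

section
/- Let R be a reverse homogeneous equidepth step bisimulation between stable configuration structures C and D. If R(X, Y), then for every n ∈ ℕ the multiset of labels of events of X at depth exactly n equals the multiset of labels of events of Y at depth exactly n. -/
universe u v

/-- A configuration structure over event type `E` and label alphabet `L`:
a family of finite sets of events (configurations) with a labelling. -/
structure CS (E : Type u) (L : Type v) where
  C : Set (Set E)
  finite : ∀ X ∈ C, X.Finite
  label : E → L

namespace CS

variable {E E₁ E₂ : Type u} {L : Type v}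

/-- Stability: rooted, connected, closed under bounded unions and intersections. -/
def IsStable (𝒞 : CS E L) : Prop :=
  ∅ ∈ 𝒞.C ∧
  (∀ X ∈ 𝒞.C, X ≠ ∅ → ∃ e ∈ X, X \ {e} ∈ 𝒞.C) ∧
  (∀ X ∈ 𝒞.C, ∀ Y ∈ 𝒞.C, ∀ Z ∈ 𝒞.C, X ∪ Y ⊆ Z → X ∪ Y ∈ 𝒞.C) ∧
  (∀ X ∈ 𝒞.C, ∀ Y ∈ 𝒞.C, ∀ Z ∈ 𝒞.C, X ∪ Y ⊆ Z → X ∩ Y ∈ 𝒞.C)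

/-- Causality: `d ≤_X e` iff every sub-configuration of `X` containing `e` contains `d`. -/
def le (𝒞 : CS E L) (X : Set E) (d e : E) : Prop :=
  ∀ Y ∈ 𝒞.C, Y ⊆ X → e ∈ Y → d ∈ Y

/-- Strict causality `d <_X e`. -/
def lt (𝒞 : CS E L) (X : Set E) (d e : E) : Prop :=
  le 𝒞 X d e ∧ d ≠ e

/-- Concurrency within a configuration. -/
def co (𝒞 : CS E L) (X : Set E) (d e : E) : Prop :=
  ¬ lt 𝒞 X d e ∧ ¬ lt 𝒞 X e d

/-- The set of minimal events of a configuration. -/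
def minE (𝒞 : CS E L) (X : Set E) : Set E :=
  {e | e ∈ X ∧ ∀ d ∈ X, ¬ lt 𝒞 X d e}

/-- Depth of an event in a configuration: the length of the longest
causal chain (w.r.t. `<_X`) in `X` up to and including `e`. -/
noncomputable def depth (𝒞 : CS E L) (X : Set E) (e : E) : ℕ :=
  sSup {n | ∃ l : List E, l.length = n ∧ l.Chain' (lt 𝒞 X) ∧
    (∀ x ∈ l, x ∈ X) ∧ l.getLast? = some e}

/-- Multiset of labels of a (finite) set of events. -/
noncomputable def labelMS (𝒞 : CS E L) (S : Set E) : Multiset L := by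
  classical exact if h : S.Finite then h.toFinset.val.map 𝒞.label else 0

/-- Single-event forward transition `X —a→ X'`. -/
def FTrans (𝒞 : CS E L) (a : L) (X X' : Set E) : Prop :=
  X ∈ 𝒞.C ∧ X' ∈ 𝒞.C ∧ X ⊆ X' ∧ ∃ e, X' \ X = {e} ∧ 𝒞.label e = a

/-- Single-event reverse transition `X ⇝a X'`. -/
def RTrans (𝒞 : CS E L) (a : L) (X X' : Set E) : Prop :=
  FTrans 𝒞 a X' X

/-- Step transition `X —A→ X'`: the added events are pairwise concurrent
in `X'` and carry the label multiset `A`. -/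
def Step (𝒞 : CS E L) (A : Multiset L) (X X' : Set E) : Prop :=
  X ∈ 𝒞.C ∧ X' ∈ 𝒞.C ∧ X ⊆ X' ∧ ∃ F : Finset E, ↑F = X' \ X ∧
    (∀ d ∈ F, ∀ e ∈ F, co 𝒞 X' d e) ∧ F.val.map 𝒞.label = A

/-- Reverse step transition `X ⇝A X'`. -/
def RStep (𝒞 : CS E L) (A : Multiset L) (X X' : Set E) : Prop :=
  Step 𝒞 A X' X

/-- Equidepth step: all added events have the same depth in `X'`. -/
def EqStep (𝒞 : CS E L) (A : Multiset L) (X X' : Set E) : Prop :=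
  Step 𝒞 A X X' ∧ ∀ d ∈ X' \ X, ∀ e ∈ X' \ X, depth 𝒞 X' d = depth 𝒞 X' e

/-- Reverse equidepth step `X ⇝A= X'`. -/
def REqStep (𝒞 : CS E L) (A : Multiset L) (X X' : Set E) : Prop :=
  EqStep 𝒞 A X' X

/-- Single-event forward transition with depth: the new event has label `a`
and depth `k` in `X'`. -/
def FTransD (𝒞 : CS E L) (a : L) (k : ℕ) (X X' : Set E) : Prop :=
  X ∈ 𝒞.C ∧ X' ∈ 𝒞.C ∧ X ⊆ X' ∧
    ∃ e, X' \ X = {e} ∧ 𝒞.label e = a ∧ depth 𝒞 X' e = k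

/-- Single-event reverse transition with depth. -/
def RTransD (𝒞 : CS E L) (a : L) (k : ℕ) (X X' : Set E) : Prop :=
  FTransD 𝒞 a k X' X

/-- A multiset of labels is homogeneous if all its elements are equal. -/
def Hom (A : Multiset L) : Prop := ∀ a ∈ A, ∀ b ∈ A, a = b

/-- `R` is a relation between configurations of `𝒞` and `𝒟`, containing `(∅, ∅)`. -/
def Dom (𝒞 : CS E₁ L) (𝒟 : CS E₂ L) (R : Set E₁ → Set E₂ → Prop) : Prop :=
  R ∅ ∅ ∧ ∀ X Y, R X Y → X ∈ 𝒞.C ∧ Y ∈ 𝒟.C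

/-- Interleaving bisimulation. -/
def IsIB (𝒞 : CS E₁ L) (𝒟 : CS E₂ L) (R : Set E₁ → Set E₂ → Prop) : Prop :=
  Dom 𝒞 𝒟 R ∧ ∀ X Y, R X Y →
    (∀ a X', FTrans 𝒞 a X X' → ∃ Y', FTrans 𝒟 a Y Y' ∧ R X' Y') ∧
    (∀ a Y', FTrans 𝒟 a Y Y' → ∃ X', FTrans 𝒞 a X X' ∧ R X' Y')

/-- Reverse bisimulation: an IB also matching reverse single-event transitions. -/
def IsRB (𝒞 : CS E₁ L) (𝒟 : CS E₂ L) (R : Set E₁ → Set E₂ → Prop) : Prop :=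
  IsIB 𝒞 𝒟 R ∧ ∀ X Y, R X Y →
    (∀ a X', RTrans 𝒞 a X X' → ∃ Y', RTrans 𝒟 a Y Y' ∧ R X' Y') ∧
    (∀ a Y', RTrans 𝒟 a Y Y' → ∃ X', RTrans 𝒞 a X X' ∧ R X' Y')

/-- Step bisimulation. -/
def IsSB (𝒞 : CS E₁ L) (𝒟 : CS E₂ L) (R : Set E₁ → Set E₂ → Prop) : Prop :=
  Dom 𝒞 𝒟 R ∧ ∀ X Y, R X Y →
    (∀ A X', Step 𝒞 A X X' → ∃ Y', Step 𝒟 A Y Y' ∧ R X' Y') ∧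
    (∀ A Y', Step 𝒟 A Y Y' → ∃ X', Step 𝒞 A X X' ∧ R X' Y')

/-- Reverse step bisimulation: an SB also matching reverse steps. -/
def IsRSB (𝒞 : CS E₁ L) (𝒟 : CS E₂ L) (R : Set E₁ → Set E₂ → Prop) : Prop :=
  IsSB 𝒞 𝒟 R ∧ ∀ X Y, R X Y →
    (∀ A X', RStep 𝒞 A X X' → ∃ Y', RStep 𝒟 A Y Y' ∧ R X' Y') ∧
    (∀ A Y', RStep 𝒟 A Y Y' → ∃ X', RStep 𝒞 A X X' ∧ R X' Y')

/-- Reverse homogeneous step bisimulation: matches forward single-event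
transitions and reverse homogeneous steps. -/
def IsRHSB (𝒞 : CS E₁ L) (𝒟 : CS E₂ L) (R : Set E₁ → Set E₂ → Prop) : Prop :=
  Dom 𝒞 𝒟 R ∧ ∀ X Y, R X Y →
    (∀ a X', FTrans 𝒞 a X X' → ∃ Y', FTrans 𝒟 a Y Y' ∧ R X' Y') ∧
    (∀ a Y', FTrans 𝒟 a Y Y' → ∃ X', FTrans 𝒞 a X X' ∧ R X' Y') ∧
    (∀ A X', Hom A → RStep 𝒞 A X X' → ∃ Y', RStep 𝒟 A Y Y' ∧ R X' Y') ∧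
    (∀ A Y', Hom A → RStep 𝒟 A Y Y' → ∃ X', RStep 𝒞 A X X' ∧ R X' Y')

/-- Reverse homogeneous equidepth step bisimulation. -/
def IsRHESB (𝒞 : CS E₁ L) (𝒟 : CS E₂ L) (R : Set E₁ → Set E₂ → Prop) : Prop :=
  Dom 𝒞 𝒟 R ∧ ∀ X Y, R X Y →
    (∀ a X', FTrans 𝒞 a X X' → ∃ Y', FTrans 𝒟 a Y Y' ∧ R X' Y') ∧
    (∀ a Y', FTrans 𝒟 a Y Y' → ∃ X', FTrans 𝒞 a X X' ∧ R X' Y') ∧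
    (∀ A X', Hom A → REqStep 𝒞 A X X' → ∃ Y', REqStep 𝒟 A Y Y' ∧ R X' Y') ∧
    (∀ A Y', Hom A → REqStep 𝒟 A Y Y' → ∃ X', REqStep 𝒞 A X X' ∧ R X' Y')

/-- Depth-respecting bisimulation. -/
def IsDB (𝒞 : CS E₁ L) (𝒟 : CS E₂ L) (R : Set E₁ → Set E₂ → Prop) : Prop :=
  Dom 𝒞 𝒟 R ∧ ∀ X Y, R X Y →
    (∀ a k X', FTransD 𝒞 a k X X' → ∃ Y', FTransD 𝒟 a k Y Y' ∧ R X' Y') ∧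
    (∀ a k Y', FTransD 𝒟 a k Y Y' → ∃ X', FTransD 𝒞 a k X X' ∧ R X' Y')

/-- Reverse depth-respecting bisimulation. -/
def IsRDB (𝒞 : CS E₁ L) (𝒟 : CS E₂ L) (R : Set E₁ → Set E₂ → Prop) : Prop :=
  IsDB 𝒞 𝒟 R ∧ ∀ X Y, R X Y →
    (∀ a k X', RTransD 𝒞 a k X X' → ∃ Y', RTransD 𝒟 a k Y Y' ∧ R X' Y') ∧
    (∀ a k Y', RTransD 𝒟 a k Y Y' → ∃ X', RTransD 𝒞 a k X X' ∧ R X' Y')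

/-- The lifting of a configuration structure w.r.t. a configuration `M`. -/
def lift (𝒞 : CS E L) (M : Set E) : CS E L where
  C := {Z | ∃ X, X ∈ 𝒞.C ∧ M ⊆ X ∧ minE 𝒞 X = minE 𝒞 M ∧ Z = X \ M}
  finite := by
    rintro Z ⟨X, hX, -, -, rfl⟩
    exact (𝒞.finite X hX).subset Set.diff_subset
  label := 𝒞.label

/-- Events of `X` of depth at most `n`. -/
def levelLe (𝒞 : CS E L) (X : Set E) (n : ℕ) : Set E :=
  {e | e ∈ X ∧ depth 𝒞 X e ≤ n}

/-- Events of `X` of depth exactly `n`. -/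
def levelEq (𝒞 : CS E L) (X : Set E) (n : ℕ) : Set E :=
  {e | e ∈ X ∧ depth 𝒞 X e = n}

/-- No equidepth auto-concurrency: distinct concurrent events never share
both label and depth. -/
def NoEqAC (𝒞 : CS E L) : Prop :=
  ∀ X ∈ 𝒞.C, ∀ d ∈ X, ∀ e ∈ X, co 𝒞 X d e → 𝒞.label d = 𝒞.label e →
    depth 𝒞 X d = depth 𝒞 X e → d = e

/-- `f` (a set of pairs) is a label- and order-preserving isomorphism
between configurations `X` and `Y`. -/
def IsIso (𝒞 : CS E₁ L) (𝒟 : CS E₂ L) (X : Set E₁) (Y : Set E₂)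
    (f : Set (E₁ × E₂)) : Prop :=
  (∀ p ∈ f, p.1 ∈ X ∧ p.2 ∈ Y) ∧
  (∀ d ∈ X, ∃! e, (d, e) ∈ f) ∧
  (∀ e ∈ Y, ∃! d, (d, e) ∈ f) ∧
  (∀ p ∈ f, 𝒞.label p.1 = 𝒟.label p.2) ∧
  (∀ p ∈ f, ∀ q ∈ f, (lt 𝒞 X p.1 q.1 ↔ lt 𝒟 Y p.2 q.2))

/-- Hereditary history-preserving bisimulation. -/
def IsHH (𝒞 : CS E₁ L) (𝒟 : CS E₂ L)
    (R : Set (Set E₁ × Set E₂ × Set (E₁ × E₂))) : Prop :=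
  (∅, ∅, ∅) ∈ R ∧
  ∀ X Y f, (X, Y, f) ∈ R →
    X ∈ 𝒞.C ∧ Y ∈ 𝒟.C ∧ IsIso 𝒞 𝒟 X Y f ∧
    (∀ a X', FTrans 𝒞 a X X' → ∃ Y' f', FTrans 𝒟 a Y Y' ∧
      (X', Y', f') ∈ R ∧ {p ∈ f' | p.1 ∈ X} = f) ∧
    (∀ a Y', FTrans 𝒟 a Y Y' → ∃ X' f', FTrans 𝒞 a X X' ∧
      (X', Y', f') ∈ R ∧ {p ∈ f' | p.1 ∈ X} = f) ∧
    (∀ a X', RTrans 𝒞 a X X' → ∃ Y' f', RTrans 𝒟 a Y Y' ∧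
      (X', Y', f') ∈ R ∧ {p ∈ f | p.1 ∈ X'} = f')

end CS

open CS

namespace Stmt14

open CS

variable {E : Type u} {L : Type v}

lemma le_trans' {𝒞 : CS E L} {X : Set E} {a b c : E} (h1 : le 𝒞 X a b) (h2 : le 𝒞 X b c) :
    le 𝒞 X a c := fun Y hY hYX hc => h1 Y hY hYX (h2 Y hY hYX hc)

/-- Separation: two distinct events of a configuration can be separated
by a sub-configuration. -/
lemma sep {𝒞 : CS E L} (h𝒞 : IsStable 𝒞) :
    ∀ m : ℕ, ∀ X ∈ 𝒞.C, X.ncard ≤ m → ∀ d ∈ X, ∀ e ∈ X, d ≠ e →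
      ∃ Y ∈ 𝒞.C, Y ⊆ X ∧ ¬ (d ∈ Y ↔ e ∈ Y) := by
  intro m
  induction m with
  | zero =>
    intro X hX hc d hd e he hne
    have hfin : X.Finite := 𝒞.finite X hX
    have : X = ∅ := (Set.ncard_eq_zero hfin).mp (Nat.le_zero.mp hc)
    exact absurd hd (by simp [this])
  | succ m ih =>
    intro X hX hc d hd e he hne
    obtain ⟨x, hxX, hX'⟩ := h𝒞.2.1 X hX (by rintro rfl; exact hd)
    by_cases hxd : x = d
    · refine ⟨X \ {x}, hX', Set.diff_subset, ?_⟩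
      subst hxd
      simp only [Set.mem_diff, Set.mem_singleton_iff]
      tauto
    · by_cases hxe : x = e
      · refine ⟨X \ {x}, hX', Set.diff_subset, ?_⟩
        subst hxe
        simp only [Set.mem_diff, Set.mem_singleton_iff]
        tauto
      · have hcard : (X \ {x}).ncard ≤ m := by
          have hfin : X.Finite := 𝒞.finite X hX
          have := Set.ncard_diff_singleton_lt_of_mem hxX hfin
          omega
        obtain ⟨Y, hY, hYsub, hsep⟩ := ih (X \ {x}) hX' hcard d ⟨hd, hxd ∘ Eq.symm⟩
          e ⟨he, hxe ∘ Eq.symm⟩ hne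
        exact ⟨Y, hY, hYsub.trans Set.diff_subset, hsep⟩

lemma le_antisymm' {𝒞 : CS E L} (h𝒞 : IsStable 𝒞) {X : Set E} (hX : X ∈ 𝒞.C)
    {d e : E} (hd : d ∈ X) (he : e ∈ X) (h1 : le 𝒞 X d e) (h2 : le 𝒞 X e d) :
    d = e := by
  by_contra hne
  obtain ⟨Y, hY, hYX, hsep⟩ := sep h𝒞 X.ncard X hX le_rfl d hd e he hne
  exact hsep ⟨fun h => h2 Y hY hYX h, fun h => h1 Y hY hYX h⟩

lemma lt_trans' {𝒞 : CS E L} (h𝒞 : IsStable 𝒞) {X : Set E} (hX : X ∈ 𝒞.C)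
    {a b c : E} (ha : a ∈ X) (hb : b ∈ X) (h1 : lt 𝒞 X a b) (h2 : lt 𝒞 X b c) :
    lt 𝒞 X a c := by
  refine ⟨le_trans' h1.1 h2.1, ?_⟩
  rintro rfl
  exact h2.2 (le_antisymm' h𝒞 hX hb ha h2.1 h1.1)

/-- Sub-configurations are downward closed. -/
lemma downclosed {𝒞 : CS E L} {X Z : Set E} (hZ : Z ∈ 𝒞.C) (hZX : Z ⊆ X)
    {d e : E} (he : e ∈ Z) (h : le 𝒞 X d e) : d ∈ Z :=
  h Z hZ hZX he

/-- Stability: causality is preserved under restriction to sub-configurations. -/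
lemma le_restrict {𝒞 : CS E L} (h𝒞 : IsStable 𝒞) {X Z : Set E} (hX : X ∈ 𝒞.C)
    (hZ : Z ∈ 𝒞.C) (hZX : Z ⊆ X) {d e : E} (he : e ∈ Z) :
    le 𝒞 Z d e ↔ le 𝒞 X d e := by
  constructor
  · intro h Y hY hYX heY
    have hYZ : Y ∩ Z ∈ 𝒞.C := h𝒞.2.2.2 Y hY Z hZ X hX (Set.union_subset hYX hZX)
    have : d ∈ Y ∩ Z := h (Y ∩ Z) hYZ Set.inter_subset_right ⟨heY, he⟩
    exact this.1
  · intro h Y hY hYZ heY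
    exact h Y hY (hYZ.trans hZX) heY

lemma lt_restrict {𝒞 : CS E L} (h𝒞 : IsStable 𝒞) {X Z : Set E} (hX : X ∈ 𝒞.C)
    (hZ : Z ∈ 𝒞.C) (hZX : Z ⊆ X) {d e : E} (he : e ∈ Z) :
    lt 𝒞 Z d e ↔ lt 𝒞 X d e := by
  unfold CS.lt
  rw [le_restrict h𝒞 hX hZ hZX he]

end Stmt14

namespace Stmt14

/-- The set of chain lengths whose sup is `depth`. -/
def dset (𝒞 : CS E L) (X : Set E) (e : E) : Set ℕ :=
  {n | ∃ l : List E, l.length = n ∧ l.Chain' (lt 𝒞 X) ∧ (∀ x ∈ l, x ∈ X) ∧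
    l.getLast? = some e}

lemma depth_eq_sSup (𝒞 : CS E L) (X : Set E) (e : E) :
    depth 𝒞 X e = sSup (dset 𝒞 X e) := rfl

lemma chain'_congr {α : Type*} {R S : α → α → Prop} {l : List α}
    (h : ∀ a ∈ l, ∀ b ∈ l, R a b → S a b) (hc : l.Chain' R) : l.Chain' S := by
  induction l with
  | nil => exact List.isChain_nil
  | cons a t ih =>
    cases t with
    | nil => exact List.isChain_singleton _
    | cons b t' =>
      simp only [List.Chain'] at hc ⊢
      rw [List.isChain_cons_cons] at hc ⊢
      refine ⟨h a (by simp) b (by simp) hc.1,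
        ih (fun x hx y hy => h x (by simp [hx]) y (by simp [hy]) ) hc.2⟩

lemma chain_nodup {𝒞 : CS E L} (h𝒞 : IsStable 𝒞) {X : Set E} (hX : X ∈ 𝒞.C)
    {l : List E} (hc : l.Chain' (lt 𝒞 X)) (hm : ∀ x ∈ l, x ∈ X) : l.Nodup := by
  set r : E → E → Prop := fun a b => lt 𝒞 X a b ∧ a ∈ X ∧ b ∈ X with hr
  have tr : Transitive r := by
    rintro a b c ⟨h1, ha, hb⟩ ⟨h2, _, hc'⟩
    exact ⟨lt_trans' h𝒞 hX ha hb h1 h2, ha, hc'⟩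
  letI : IsTrans E r := ⟨fun _ _ _ hab hbc => tr hab hbc⟩
  have hcr : l.Chain' r := chain'_congr (fun a ha b hb hab => ⟨hab, hm a ha, hm b hb⟩) hc
  have hp : l.Pairwise r := List.isChain_iff_pairwise.mp hcr
  exact hp.imp (fun hab => hab.1.2)

lemma dset_bddAbove {𝒞 : CS E L} (h𝒞 : IsStable 𝒞) {X : Set E} (hX : X ∈ 𝒞.C) (e : E) :
    ∀ n ∈ dset 𝒞 X e, n ≤ X.ncard := by
  classical
  rintro n ⟨l, rfl, hc, hm, _⟩
  have hfin : X.Finite := 𝒞.finite X hX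
  have hnd := chain_nodup h𝒞 hX hc hm
  have h1 : l.toFinset.card = l.length := List.toFinset_card_of_nodup hnd
  have h2 : l.toFinset ⊆ hfin.toFinset := by
    intro x hx
    rw [List.mem_toFinset] at hx
    exact hfin.mem_toFinset.mpr (hm x hx)
  rw [Set.ncard_eq_toFinset_card X hfin, ← h1]
  exact Finset.card_le_card h2

lemma one_mem_dset {𝒞 : CS E L} {X : Set E} {e : E} (he : e ∈ X) :
    1 ∈ dset 𝒞 X e := ⟨[e], rfl, List.isChain_singleton _, by simp [he], rfl⟩

lemma depth_pos {𝒞 : CS E L} (h𝒞 : IsStable 𝒞) {X : Set E} (hX : X ∈ 𝒞.C)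
    {e : E} (he : e ∈ X) : 1 ≤ depth 𝒞 X e := by
  rw [depth_eq_sSup]
  exact le_csSup ⟨X.ncard, fun n hn => dset_bddAbove h𝒞 hX e n hn⟩ (one_mem_dset he)

lemma depth_mem_dset {𝒞 : CS E L} (h𝒞 : IsStable 𝒞) {X : Set E} (hX : X ∈ 𝒞.C)
    {e : E} (he : e ∈ X) : depth 𝒞 X e ∈ dset 𝒞 X e := by
  rw [depth_eq_sSup]
  exact Nat.sSup_mem ⟨1, one_mem_dset he⟩ ⟨X.ncard, fun n hn => dset_bddAbove h𝒞 hX e n hn⟩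

lemma le_depth_of_mem {𝒞 : CS E L} (h𝒞 : IsStable 𝒞) {X : Set E} (hX : X ∈ 𝒞.C)
    {e : E} {n : ℕ} (hn : n ∈ dset 𝒞 X e) : n ≤ depth 𝒞 X e := by
  rw [depth_eq_sSup]
  exact le_csSup ⟨X.ncard, fun m hm => dset_bddAbove h𝒞 hX e m hm⟩ hn

/-- Strict causality strictly increases depth. -/
lemma depth_lt_of_lt {𝒞 : CS E L} (h𝒞 : IsStable 𝒞) {X : Set E} (hX : X ∈ 𝒞.C)
    {d e : E} (hd : d ∈ X) (he : e ∈ X) (hlt : lt 𝒞 X d e) :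
    depth 𝒞 X d < depth 𝒞 X e := by
  obtain ⟨l, hlen, hc, hm, hlast⟩ := depth_mem_dset h𝒞 hX hd
  have hne : l ≠ [] := by rintro rfl; simp at hlast
  have hmem : depth 𝒞 X d + 1 ∈ dset 𝒞 X e := by
    refine ⟨l ++ [e], by simp [hlen], ?_, ?_, by simp⟩
    · simp only [List.Chain']
      rw [List.isChain_append]
      refine ⟨hc, by simp, ?_⟩
      intro x hx y hy
      rw [hlast] at hx
      simp at hx hy
      subst hx; subst hy
      exact hlt
    · intro x hx
      rcases List.mem_append.mp hx with h | h
      · exact hm x h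
      · simp at h; subst h; exact he
  have := le_depth_of_mem h𝒞 hX hmem
  omega

/-- Every element of a chain causally precedes its last element. -/
lemma chain_le_last {𝒞 : CS E L} {X : Set E} :
    ∀ {l : List E}, l.Chain' (lt 𝒞 X) → ∀ {e : E}, l.getLast? = some e →
      ∀ x ∈ l, le 𝒞 X x e := by
  intro l
  induction l with
  | nil => intro _ e h; simp at h
  | cons a t ih =>
    intro hc e hlast x hx
    cases t with
    | nil =>
      simp at hlast hx
      subst hlast; subst hx
      exact fun Y _ _ h => h
    | cons b t' =>
      simp only [List.Chain'] at hc
      rw [List.isChain_cons_cons] at hc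
      have hlast' : (b :: t').getLast? = some e := by
        rw [List.getLast?_cons_cons] at hlast
        exact hlast
      rcases List.mem_cons.mp hx with rfl | hx'
      · exact le_trans' hc.1.1 (ih hc.2 hlast' b (by simp))
      · exact ih hc.2 hlast' x hx'

/-- Depth is invariant under restriction to a sub-configuration. -/
lemma depth_restrict {𝒞 : CS E L} (h𝒞 : IsStable 𝒞) {X Z : Set E} (hX : X ∈ 𝒞.C)
    (hZ : Z ∈ 𝒞.C) (hZX : Z ⊆ X) {e : E} (he : e ∈ Z) :
    depth 𝒞 Z e = depth 𝒞 X e := by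
  have hsets : dset 𝒞 Z e = dset 𝒞 X e := by
    ext n
    constructor
    · rintro ⟨l, hlen, hc, hm, hlast⟩
      refine ⟨l, hlen, ?_, fun x hx => hZX (hm x hx), hlast⟩
      exact chain'_congr (fun a _ b hb hab =>
        (lt_restrict h𝒞 hX hZ hZX (hm b hb)).mp hab) hc
    · rintro ⟨l, hlen, hc, hm, hlast⟩
      have hmZ : ∀ x ∈ l, x ∈ Z := fun x hx =>
        downclosed hZ hZX he (chain_le_last hc hlast x hx)
      refine ⟨l, hlen, ?_, hmZ, hlast⟩
      exact chain'_congr (fun a _ b hb hab =>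
        (lt_restrict h𝒞 hX hZ hZX (hmZ b hb)).mpr hab) hc
  rw [depth_eq_sSup, depth_eq_sSup, hsets]

/-- Contiguity of depths: below a depth-`(m+1)` event there is a depth-`m` event. -/
lemma depth_pred {𝒞 : CS E L} (h𝒞 : IsStable 𝒞) {X : Set E} (hX : X ∈ 𝒞.C)
    {e : E} (he : e ∈ X) {m : ℕ} (hm : 1 ≤ m) (hd : depth 𝒞 X e = m + 1) :
    ∃ d ∈ X, depth 𝒞 X d = m := by
  obtain ⟨l, hlen, hc, hmem, hlast⟩ := depth_mem_dset h𝒞 hX he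
  rw [hd] at hlen
  have hsplit : l.dropLast ++ [e] = l := List.dropLast_append_getLast? e hlast
  set l' := l.dropLast with hl'
  have hlen' : l'.length = m := by
    rw [hl', List.length_dropLast, hlen]
    omega
  have hl'ne : l' ≠ [] := by
    intro h
    rw [h] at hlen'
    simp at hlen'
    omega
  set d := l'.getLast hl'ne with hdd
  have hdlast : l'.getLast? = some d := List.getLast?_eq_getLast_of_ne_nil hl'ne
  have hdl' : d ∈ l' := List.getLast_mem hl'ne
  have hdl : d ∈ l := by
    rw [← hsplit]
    exact List.mem_append_left _ hdl'
  have hdX : d ∈ X := hmem d hdl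
  rw [← hsplit] at hc
  simp only [List.Chain'] at hc
  rw [List.isChain_append] at hc
  obtain ⟨hc1, -, hlink⟩ := hc
  have hlt : lt 𝒞 X d e := by
    refine hlink d ?_ e rfl
    rw [hdlast]; rfl
  have hm1 : m ∈ dset 𝒞 X d :=
    ⟨l', hlen', hc1, fun x hx => hmem x (by rw [← hsplit]; exact List.mem_append_left _ hx),
      hdlast⟩
  have h1 : m ≤ depth 𝒞 X d := le_depth_of_mem h𝒞 hX hm1
  have h2 : depth 𝒞 X d < depth 𝒞 X e := depth_lt_of_lt h𝒞 hX hdX he hlt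
  exact ⟨d, hdX, by omega⟩

end Stmt14

namespace Stmt14

/-- A maximal event can be removed from a configuration. -/
lemma remove_max {𝒞 : CS E L} (h𝒞 : IsStable 𝒞) :
    ∀ m : ℕ, ∀ X ∈ 𝒞.C, X.ncard ≤ m → ∀ e ∈ X, (∀ f ∈ X, ¬ lt 𝒞 X e f) →
      X \ {e} ∈ 𝒞.C := by
  intro m
  induction m with
  | zero =>
    intro X hX hc e he _
    have hfin : X.Finite := 𝒞.finite X hX
    have : X = ∅ := (Set.ncard_eq_zero hfin).mp (Nat.le_zero.mp hc)
    exact absurd he (by simp [this])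
  | succ m ih =>
    intro X hX hc e he hmax
    obtain ⟨x, hxX, hX'⟩ := h𝒞.2.1 X hX (by rintro rfl; exact he)
    by_cases hxe : x = e
    · subst hxe; exact hX'
    · have heX' : e ∈ X \ {x} := ⟨he, fun h => hxe (by simpa using h.symm)⟩
      have hcard : (X \ {x}).ncard ≤ m := by
        have := Set.ncard_diff_singleton_lt_of_mem hxX (𝒞.finite X hX)
        omega
      have hmax' : ∀ f ∈ X \ {x}, ¬ lt 𝒞 (X \ {x}) e f := fun f hf hlt =>
        hmax f hf.1 ((lt_restrict h𝒞 hX hX' Set.diff_subset hf).mp hlt)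
      have h1 : (X \ {x}) \ {e} ∈ 𝒞.C := ih (X \ {x}) hX' hcard e heX' hmax'
      have hnle : ¬ le 𝒞 X e x := fun hle =>
        hmax x hxX ⟨hle, fun h => hxe h.symm⟩
      rw [CS.le] at hnle
      push_neg at hnle
      obtain ⟨W, hW, hWX, hxW, heW⟩ := hnle
      have hunion : ((X \ {x}) \ {e}) ∪ W ∈ 𝒞.C :=
        h𝒞.2.2.1 _ h1 W hW X hX
          (Set.union_subset ((Set.diff_subset).trans Set.diff_subset) hWX)
      have heq : ((X \ {x}) \ {e}) ∪ W = X \ {e} := by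
        ext y
        simp only [Set.mem_union, Set.mem_diff, Set.mem_singleton_iff]
        constructor
        · rintro (⟨⟨hyX, _⟩, hye⟩ | hyW)
          · exact ⟨hyX, hye⟩
          · exact ⟨hWX hyW, fun h => heW (h ▸ hyW)⟩
        · rintro ⟨hyX, hye⟩
          by_cases hyx : y = x
          · right; exact hyx ▸ hxW
          · left; exact ⟨⟨hyX, hyx⟩, hye⟩
      rwa [heq] at hunion

lemma remove_finset {𝒞 : CS E L} (h𝒞 : IsStable 𝒞) {X : Set E} (hX : X ∈ 𝒞.C) :
    ∀ s : Finset E, ↑s ⊆ X → (∀ e ∈ s, ∀ f ∈ X, ¬ lt 𝒞 X e f) → X \ ↑s ∈ 𝒞.C := by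
  intro s
  classical
  induction s using Finset.induction_on with
  | empty => intro _ _; simpa using hX
  | @insert a s ha ih =>
    intro hsub hmaxall
    have h1 : X \ ↑s ∈ 𝒞.C := by
      refine ih ?_ fun e he f hf => hmaxall e (Finset.mem_insert_of_mem he) f hf
      refine (Finset.coe_subset.mpr (Finset.subset_insert a s)).trans hsub
    have haX : a ∈ X \ ↑s := ⟨hsub (by simp), by simpa using ha⟩
    have hmax' : ∀ f ∈ X \ ↑s, ¬ lt 𝒞 (X \ ↑s) a f := fun f hf hlt =>
      hmaxall a (Finset.mem_insert_self _ _) f hf.1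
        ((lt_restrict h𝒞 hX h1 Set.diff_subset hf).mp hlt)
    have h2 := remove_max h𝒞 (X \ ↑s).ncard (X \ ↑s) h1 le_rfl a haX hmax'
    have heq : (X \ ↑s) \ {a} = X \ ↑(insert a s) := by
      ext y
      simp only [Set.mem_diff, Set.mem_singleton_iff, Finset.coe_insert, Set.mem_insert_iff,
        Finset.mem_coe]
      tauto
    rwa [heq] at h2

lemma remove_max_set {𝒞 : CS E L} (h𝒞 : IsStable 𝒞) {X A : Set E} (hX : X ∈ 𝒞.C)
    (hAX : A ⊆ X) (hmax : ∀ e ∈ A, ∀ f ∈ X, ¬ lt 𝒞 X e f) : X \ A ∈ 𝒞.C := by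
  have hAfin : A.Finite := (𝒞.finite X hX).subset hAX
  have hcoe : ↑hAfin.toFinset = A := hAfin.coe_toFinset
  rw [← hcoe]
  refine remove_finset h𝒞 hX hAfin.toFinset (by rw [hcoe]; exact hAX) ?_
  intro e he f hf
  exact hmax e (hAfin.mem_toFinset.mp he) f hf

/-- Maximal depth of a configuration. -/
noncomputable def maxd (𝒞 : CS E L) (X : Set E) : ℕ := sSup (depth 𝒞 X '' X)

lemma depth_le_maxd {𝒞 : CS E L} {X : Set E} (hfin : X.Finite) {e : E} (he : e ∈ X) :
    depth 𝒞 X e ≤ maxd 𝒞 X :=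
  le_csSup ((hfin.image _).bddAbove) (Set.mem_image_of_mem _ he)

lemma exists_maxd {𝒞 : CS E L} {X : Set E} (hfin : X.Finite) (hne : X.Nonempty) :
    ∃ e ∈ X, depth 𝒞 X e = maxd 𝒞 X := by
  have : maxd 𝒞 X ∈ depth 𝒞 X '' X :=
    Nat.sSup_mem (hne.image _) ((hfin.image _).bddAbove)
  obtain ⟨e, he, hd⟩ := this
  exact ⟨e, he, hd⟩

/-! ### labelMS lemmas -/

lemma labelMS_def (𝒞 : CS E L) {S : Set E} (h : S.Finite) :
    labelMS 𝒞 S = h.toFinset.val.map 𝒞.label := by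
  unfold CS.labelMS
  rw [dif_pos h]

lemma labelMS_empty (𝒞 : CS E L) : labelMS 𝒞 (∅ : Set E) = 0 := by
  rw [labelMS_def 𝒞 Set.finite_empty]
  simp

lemma labelMS_card (𝒞 : CS E L) {S : Set E} (h : S.Finite) :
    Multiset.card (labelMS 𝒞 S) = S.ncard := by
  rw [labelMS_def 𝒞 h, Multiset.card_map, Set.ncard_eq_toFinset_card S h]
  rfl

lemma labelMS_union (𝒞 : CS E L) {S T : Set E} (hS : S.Finite) (hT : T.Finite)
    (hdisj : Disjoint S T) :
    labelMS 𝒞 (S ∪ T) = labelMS 𝒞 S + labelMS 𝒞 T := by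
  classical
  rw [labelMS_def 𝒞 (hS.union hT), labelMS_def 𝒞 hS, labelMS_def 𝒞 hT]
  have hd : Disjoint hS.toFinset hT.toFinset := by
    rw [Finset.disjoint_left]
    intro x hx hx'
    exact Set.disjoint_left.mp hdisj (hS.mem_toFinset.mp hx) (hT.mem_toFinset.mp hx')
  have heq : (hS.union hT).toFinset = hS.toFinset.disjUnion hT.toFinset hd := by
    ext x
    simp [Finset.mem_disjUnion]
  rw [heq]
  show Multiset.map _ (hS.toFinset.val + hT.toFinset.val) = _
  rw [Multiset.map_add]

lemma labelMS_diff (𝒞 : CS E L) {S T : Set E} (hS : S.Finite) (hTS : T ⊆ S) :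
    labelMS 𝒞 S = labelMS 𝒞 (S \ T) + labelMS 𝒞 T := by
  conv_lhs => rw [← Set.diff_union_of_subset hTS]
  exact labelMS_union 𝒞 (hS.diff (t := T)) (hS.subset hTS) Set.disjoint_sdiff_left

lemma labelMS_replicate (𝒞 : CS E L) {S : Set E} (hS : S.Finite) {a : L}
    (h : ∀ e ∈ S, 𝒞.label e = a) :
    labelMS 𝒞 S = Multiset.replicate S.ncard a := by
  rw [labelMS_def 𝒞 hS]
  apply Multiset.eq_replicate.mpr
  constructor
  · rw [Multiset.card_map, Set.ncard_eq_toFinset_card S hS]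
    rfl
  · intro b hb
    obtain ⟨x, hx, rfl⟩ := Multiset.mem_map.mp hb
    exact h x (hS.mem_toFinset.mp hx)

/-! ### level lemmas -/

lemma levelEq_subset (𝒞 : CS E L) (X : Set E) (n : ℕ) : levelEq 𝒞 X n ⊆ X :=
  fun _ he => he.1

lemma levelEq_empty (𝒞 : CS E L) (n : ℕ) : levelEq 𝒞 (∅ : Set E) n = ∅ := by
  ext e
  simp [levelEq]

lemma levelEq_diff {𝒞 : CS E L} (h𝒞 : IsStable 𝒞) {X A : Set E} (hX : X ∈ 𝒞.C)
    (hXA : X \ A ∈ 𝒞.C) (j : ℕ) :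
    levelEq 𝒞 (X \ A) j = levelEq 𝒞 X j \ A := by
  ext f
  simp only [levelEq, Set.mem_setOf_eq, Set.mem_diff]
  constructor
  · rintro ⟨hf, hd⟩
    rw [depth_restrict h𝒞 hX hXA Set.diff_subset hf] at hd
    exact ⟨⟨hf.1, hd⟩, hf.2⟩
  · rintro ⟨⟨hfX, hd⟩, hfA⟩
    refine ⟨⟨hfX, hfA⟩, ?_⟩
    rw [depth_restrict h𝒞 hX hXA Set.diff_subset ⟨hfX, hfA⟩]
    exact hd

/-- Bookkeeping: effect on level label multisets of removing a set of events
all at depth `k` with label `a`. -/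
lemma step_levels {𝒞 : CS E L} (h𝒞 : IsStable 𝒞) {X A : Set E} (hX : X ∈ 𝒞.C)
    (hXA : X \ A ∈ 𝒞.C) (hAX : A ⊆ X) {k : ℕ} {a : L}
    (hdep : ∀ e ∈ A, depth 𝒞 X e = k) (hlab : ∀ e ∈ A, 𝒞.label e = a) :
    (∀ j, j ≠ k → labelMS 𝒞 (levelEq 𝒞 (X \ A) j) = labelMS 𝒞 (levelEq 𝒞 X j)) ∧
    labelMS 𝒞 (levelEq 𝒞 X k) =
      labelMS 𝒞 (levelEq 𝒞 (X \ A) k) + Multiset.replicate A.ncard a := by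
  have hfinX : X.Finite := 𝒞.finite X hX
  have hAfin : A.Finite := hfinX.subset hAX
  constructor
  · intro j hj
    rw [levelEq_diff h𝒞 hX hXA j]
    have : levelEq 𝒞 X j \ A = levelEq 𝒞 X j := by
      rw [sdiff_eq_self_iff_disjoint, Set.disjoint_left]
      intro e heA heL
      exact hj ((hdep e heA).symm.trans heL.2).symm
    rw [this]
  · rw [levelEq_diff h𝒞 hX hXA k]
    have hsub : A ⊆ levelEq 𝒞 X k := fun e he => ⟨hAX he, hdep e he⟩
    rw [← labelMS_replicate 𝒞 hAfin hlab]
    exact labelMS_diff 𝒞 (hfinX.subset (levelEq_subset 𝒞 X k)) hsub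

end Stmt14

namespace Stmt14

/-- Construct a reverse homogeneous equidepth step removing a set of top-depth,
equally-labelled events. -/
lemma mk_req {𝒞 : CS E L} (h𝒞 : IsStable 𝒞) {X : Set E} (hX : X ∈ 𝒞.C)
    {n : ℕ} (htop : ∀ f ∈ X, depth 𝒞 X f ≤ n) {A : Set E} (hAX : A ⊆ X)
    (hdep : ∀ e ∈ A, depth 𝒞 X e = n) {a : L} (hlab : ∀ e ∈ A, 𝒞.label e = a) :
    X \ A ∈ 𝒞.C ∧ REqStep 𝒞 (Multiset.replicate A.ncard a) X (X \ A) ∧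
      Hom (Multiset.replicate A.ncard a) := by
  classical
  have hfinX : X.Finite := 𝒞.finite X hX
  have hAfin : A.Finite := hfinX.subset hAX
  have hmax : ∀ e ∈ A, ∀ f ∈ X, ¬ lt 𝒞 X e f := by
    intro e he f hf hlt
    have := depth_lt_of_lt h𝒞 hX (hAX he) hf hlt
    rw [hdep e he] at this
    exact absurd (htop f hf) (by omega)
  have hXA : X \ A ∈ 𝒞.C := remove_max_set h𝒞 hX hAX hmax
  have hAeq : X \ (X \ A) = A := Set.diff_diff_cancel_left hAX
  refine ⟨hXA, ⟨⟨hXA, hX, Set.diff_subset, hAfin.toFinset, ?_, ?_, ?_⟩, ?_⟩, ?_⟩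
  · rw [hAfin.coe_toFinset, hAeq]
  · intro d hd e he
    have hdA := hAfin.mem_toFinset.mp hd
    have heA := hAfin.mem_toFinset.mp he
    constructor
    · intro hlt
      have := depth_lt_of_lt h𝒞 hX (hAX hdA) (hAX heA) hlt
      rw [hdep d hdA, hdep e heA] at this
      omega
    · intro hlt
      have := depth_lt_of_lt h𝒞 hX (hAX heA) (hAX hdA) hlt
      rw [hdep d hdA, hdep e heA] at this
      omega
  · apply Multiset.eq_replicate.mpr
    constructor
    · rw [Multiset.card_map, Set.ncard_eq_toFinset_card A hAfin]
      rfl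
    · intro b hb
      obtain ⟨x, hx, rfl⟩ := Multiset.mem_map.mp hb
      exact hlab x (hAfin.mem_toFinset.mp hx)
  · intro d hd e he
    rw [hAeq] at hd he
    rw [hdep d hd, hdep e he]
  · intro x hx y hy
    rw [Multiset.eq_of_mem_replicate hx, Multiset.eq_of_mem_replicate hy]

/-- Destruct a reverse homogeneous equidepth step. -/
lemma destruct_req {𝒟 : CS E L} (h𝒟 : IsStable 𝒟) {Y Y' : Set E} {c : ℕ} {a : L}
    (hc : 1 ≤ c) (h : REqStep 𝒟 (Multiset.replicate c a) Y Y') :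
    Y ∈ 𝒟.C ∧ Y' ∈ 𝒟.C ∧ Y' = Y \ (Y \ Y') ∧ (Y \ Y') ⊆ Y ∧ (Y \ Y').ncard = c ∧
    (∀ b ∈ Y \ Y', 𝒟.label b = a) ∧
    (∀ b ∈ Y \ Y', ∀ f ∈ Y, ¬ lt 𝒟 Y b f) ∧
    ∃ k, 1 ≤ k ∧ ∀ b ∈ Y \ Y', depth 𝒟 Y b = k := by
  obtain ⟨⟨hY', hY, hsub, F, hF, hco, hmap⟩, heqd⟩ := h
  have hBfin : (Y \ Y').Finite := (𝒟.finite Y hY).diff (t := Y')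
  have hncard : (Y \ Y').ncard = c := by
    rw [← hF]
    have h1 : (↑F : Set E).ncard = F.card := by simp [Set.ncard_coe_finset]
    rw [h1]
    have := congrArg Multiset.card hmap
    rw [Multiset.card_map, Multiset.card_replicate] at this
    exact this
  have hlabB : ∀ b ∈ Y \ Y', 𝒟.label b = a := by
    intro b hb
    rw [← hF, Finset.mem_coe] at hb
    have : 𝒟.label b ∈ Multiset.map 𝒟.label F.val := Multiset.mem_map_of_mem _ hb
    rw [hmap] at this
    exact Multiset.eq_of_mem_replicate this
  have hmaxB : ∀ b ∈ Y \ Y', ∀ f ∈ Y, ¬ lt 𝒟 Y b f := by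
    intro b hb f hf hlt
    have hfB : f ∈ Y \ Y' := by
      refine ⟨hf, fun hfY' => ?_⟩
      exact hb.2 (downclosed hY' hsub hfY' hlt.1)
    have hd := heqd b hb f hfB
    have := depth_lt_of_lt h𝒟 hY hb.1 hf hlt
    omega
  have hBne : (Y \ Y').Nonempty := by
    rw [← Set.ncard_pos hBfin] at *
    omega
  obtain ⟨b₀, hb₀⟩ := hBne
  refine ⟨hY, hY', (Set.diff_diff_cancel_left hsub).symm, Set.diff_subset, hncard,
    hlabB, hmaxB, depth 𝒟 Y b₀, depth_pos h𝒟 hY hb₀.1, fun b hb => heqd b hb b₀ hb₀⟩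

/-- No nonempty reverse step from the empty configuration. -/
lemma no_rstep_empty {𝒞 : CS E L} {A : Multiset L} {X' : Set E}
    (h : REqStep 𝒞 A (∅ : Set E) X') : A = 0 := by
  obtain ⟨⟨_, _, hsub, F, hF, _, hmap⟩, _⟩ := h
  have : (↑F : Set E) = ∅ := by rw [hF]; simp
  have hFe : F = ∅ := by
    ext x
    simp only [Finset.notMem_empty, iff_false]
    intro hx
    have : x ∈ (↑F : Set E) := hx
    rw [‹(↑F : Set E) = ∅›] at this
    exact this
  rw [← hmap, hFe]
  simp

/-- Construct a singleton reverse equidepth step. -/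
lemma mk_singleton_req {𝒟 : CS E L} (h𝒟 : IsStable 𝒟) {Y : Set E} (hY : Y ∈ 𝒟.C)
    {e : E} (he : e ∈ Y) (hY' : Y \ {e} ∈ 𝒟.C) :
    REqStep 𝒟 (Multiset.replicate 1 (𝒟.label e)) Y (Y \ {e}) ∧
      Hom (Multiset.replicate 1 (𝒟.label e)) := by
  classical
  have heq : Y \ (Y \ {e}) = {e} := by
    rw [Set.diff_diff_cancel_left (by simpa using he)]
  refine ⟨⟨⟨hY', hY, Set.diff_subset, {e}, ?_, ?_, ?_⟩, ?_⟩, ?_⟩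
  · rw [heq]; simp
  · intro d hd f hf
    simp at hd hf
    subst hd; subst hf
    exact ⟨fun h => h.2 rfl, fun h => h.2 rfl⟩
  · simp
  · intro d hd f hf
    rw [heq] at hd hf
    simp at hd hf
    rw [hd, hf]
  · intro x hx y hy
    rw [Multiset.eq_of_mem_replicate hx, Multiset.eq_of_mem_replicate hy]

end Stmt14

namespace Stmt14

lemma mem_labelMS {𝒞 : CS E L} {S : Set E} (hS : S.Finite) {x : L} :
    x ∈ labelMS 𝒞 S ↔ ∃ e ∈ S, 𝒞.label e = x := by
  rw [labelMS_def 𝒞 hS]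
  simp [Multiset.mem_map, Set.Finite.mem_toFinset]

lemma rhesb_flip {E₁ E₂ : Type u} {L : Type v} {𝒞 : CS E₁ L} {𝒟 : CS E₂ L}
    {R : Set E₁ → Set E₂ → Prop} (hR : IsRHESB 𝒞 𝒟 R) :
    IsRHESB 𝒟 𝒞 (fun Y X => R X Y) := by
  obtain ⟨⟨hdom0, hdom⟩, hcl⟩ := hR
  refine ⟨⟨hdom0, fun Y X h => ⟨(hdom X Y h).2, (hdom X Y h).1⟩⟩, ?_⟩
  intro Y X h
  obtain ⟨c1, c2, c3, c4⟩ := hcl X Y h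
  exact ⟨c2, c1, c4, c3⟩

/-- One experiment: reverse the whole label-class of a top-depth event of `X`
and analyse the matching reverse step of `Y`. -/
lemma probe {E₁ E₂ : Type u} {L : Type v} {𝒞 : CS E₁ L} {𝒟 : CS E₂ L}
    (h𝒞 : IsStable 𝒞) (h𝒟 : IsStable 𝒟) {R : Set E₁ → Set E₂ → Prop}
    (hR : IsRHESB 𝒞 𝒟 R) {X : Set E₁} {Y : Set E₂} (hXY : R X Y)
    {n : ℕ} (htopX : ∀ f ∈ X, depth 𝒞 X f ≤ n) {e₀ : E₁} (he₀ : e₀ ∈ X)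
    (he₀d : depth 𝒞 X e₀ = n)
    (ih : ∀ X' Y', R X' Y' → X'.ncard + Y'.ncard < X.ncard + Y.ncard →
      ∀ j, labelMS 𝒞 (levelEq 𝒞 X' j) = labelMS 𝒟 (levelEq 𝒟 Y' j)) :
    (∀ j, labelMS 𝒞 (levelEq 𝒞 X j) = labelMS 𝒟 (levelEq 𝒟 Y j)) ∨
    ∃ k c, 1 ≤ c ∧ 1 ≤ k ∧ k ≠ n ∧ (∃ f ∈ Y, depth 𝒟 Y f = k) ∧
      (∀ j, j ≠ n → j ≠ k →
        labelMS 𝒞 (levelEq 𝒞 X j) = labelMS 𝒟 (levelEq 𝒟 Y j)) ∧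
      labelMS 𝒞 (levelEq 𝒞 X n) =
        labelMS 𝒟 (levelEq 𝒟 Y n) + Multiset.replicate c (𝒞.label e₀) ∧
      labelMS 𝒟 (levelEq 𝒟 Y k) =
        labelMS 𝒞 (levelEq 𝒞 X k) + Multiset.replicate c (𝒞.label e₀) ∧
      𝒞.label e₀ ∉ labelMS 𝒟 (levelEq 𝒟 Y n) := by
  classical
  have hX : X ∈ 𝒞.C := (hR.1.2 X Y hXY).1
  have hY : Y ∈ 𝒟.C := (hR.1.2 X Y hXY).2
  have hfinX := 𝒞.finite X hX
  have hfinY := 𝒟.finite Y hY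
  set a := 𝒞.label e₀ with ha
  set A : Set E₁ := {e ∈ X | depth 𝒞 X e = n ∧ 𝒞.label e = a} with hA
  have hAX : A ⊆ X := fun e he => he.1
  have he₀A : e₀ ∈ A := ⟨he₀, he₀d, rfl⟩
  have hAdep : ∀ e ∈ A, depth 𝒞 X e = n := fun e he => he.2.1
  have hAlab : ∀ e ∈ A, 𝒞.label e = a := fun e he => he.2.2
  have hAfin := hfinX.subset hAX
  have hc1 : 1 ≤ A.ncard := (Set.ncard_pos hAfin).mpr ⟨e₀, he₀A⟩
  obtain ⟨hXA, hstep, hhom⟩ := mk_req h𝒞 hX htopX hAX hAdep hAlab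
  obtain ⟨Y₁, hstepY, hR1⟩ := ((hR.2 X Y hXY).2.2.1) _ _ hhom hstep
  obtain ⟨-, hY₁C, hY₁eq, hBY, hBcard, hBlab, hBmax, k, hk1, hBdep⟩ :=
    destruct_req h𝒟 hc1 hstepY
  set B := Y \ Y₁ with hB
  have hYB : Y \ B ∈ 𝒟.C := by rw [← hY₁eq]; exact hY₁C
  obtain ⟨SLX1, SLX2⟩ := step_levels h𝒞 hX hXA hAX hAdep hAlab
  obtain ⟨SLY1, SLY2⟩ := step_levels h𝒟 hY hYB hBY hBdep hBlab
  have hsz : (X \ A).ncard + Y₁.ncard < X.ncard + Y.ncard := by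
    have h1 : (X \ A).ncard = X.ncard - A.ncard := Set.ncard_diff hAX hAfin
    have h2 : A.ncard ≤ X.ncard := Set.ncard_le_ncard hAX hfinX
    have h3 : Y₁.ncard = Y.ncard - B.ncard := by
      rw [hY₁eq]; exact Set.ncard_diff hBY (hfinY.subset hBY)
    have h4 : B.ncard ≤ Y.ncard := Set.ncard_le_ncard hBY hfinY
    rw [h1, h3, hBcard]
    omega
  have IH := ih _ _ hR1 hsz
  rw [hY₁eq] at IH
  -- IH : ∀ j, labelMS 𝒞 (levelEq 𝒞 (X \ A) j) = labelMS 𝒟 (levelEq 𝒟 (Y \ B) j)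
  by_cases hkn : k = n
  · left
    intro j
    by_cases hj : j = n
    · rw [hj, SLX2, IH n, ← hBcard, ← hkn]
      exact SLY2.symm
    · rw [← SLX1 j hj, IH j, SLY1 j (by rw [hkn]; exact hj)]
  · right
    have hBfin : B.Finite := hfinY.diff (t := Y₁)
    have hBne : B.Nonempty := (Set.ncard_pos hBfin).mp (by omega)
    obtain ⟨b₀, hb₀⟩ := hBne
    refine ⟨k, A.ncard, hc1, hk1, hkn, ⟨b₀, hBY hb₀, hBdep b₀ hb₀⟩, ?_, ?_, ?_, ?_⟩
    · intro j hjn hjk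
      rw [← SLX1 j hjn, IH j, SLY1 j hjk]
    · rw [SLX2, IH n, SLY1 n (fun h => hkn h.symm)]
    · rw [SLY2, hBcard, ← SLX1 k hkn, IH k]
    · rw [← SLY1 n (fun h => hkn h.symm), ← IH n]
      have hlev : levelEq 𝒞 (X \ A) n = levelEq 𝒞 X n \ A := levelEq_diff h𝒞 hX hXA n
      rw [hlev, mem_labelMS (hfinX.subset ((Set.diff_subset).trans (levelEq_subset 𝒞 X n)))]
      rintro ⟨e, ⟨heL, heA⟩, hel⟩
      exact heA ⟨heL.1, heL.2, hel⟩

end Stmt14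

namespace Stmt14

lemma aux {E₁ E₂ : Type u} {L : Type v} {𝒞 : CS E₁ L} {𝒟 : CS E₂ L}
    (h𝒞 : IsStable 𝒞) (h𝒟 : IsStable 𝒟) {R : Set E₁ → Set E₂ → Prop}
    (hR : IsRHESB 𝒞 𝒟 R) {X : Set E₁} {Y : Set E₂} (hXY : R X Y)
    (hd : maxd 𝒟 Y ≤ maxd 𝒞 X)
    (ih : ∀ X' Y', R X' Y' → X'.ncard + Y'.ncard < X.ncard + Y.ncard →
      ∀ j, labelMS 𝒞 (levelEq 𝒞 X' j) = labelMS 𝒟 (levelEq 𝒟 Y' j)) :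
    ∀ j, labelMS 𝒞 (levelEq 𝒞 X j) = labelMS 𝒟 (levelEq 𝒟 Y j) := by
  classical
  have hX : X ∈ 𝒞.C := (hR.1.2 X Y hXY).1
  have hY : Y ∈ 𝒟.C := (hR.1.2 X Y hXY).2
  have hfinX := 𝒞.finite X hX
  have hfinY := 𝒟.finite Y hY
  by_cases hXE : X = ∅
  · have hYE : Y = ∅ := by
      by_contra hYne
      obtain ⟨e, heY, hY'⟩ := h𝒟.2.1 Y hY hYne
      obtain ⟨hstep, hhom⟩ := mk_singleton_req h𝒟 hY heY hY'
      obtain ⟨X', hstepX, -⟩ := ((hR.2 X Y hXY).2.2.2) _ _ hhom hstep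
      rw [hXE] at hstepX
      have h0 := no_rstep_empty hstepX
      have := congrArg Multiset.card h0
      simp at this
    intro j
    rw [hXE, hYE, levelEq_empty, levelEq_empty, labelMS_empty, labelMS_empty]
  · have hXne : X.Nonempty := Set.nonempty_iff_ne_empty.mpr hXE
    obtain ⟨e₀, he₀, he₀d⟩ := exists_maxd hfinX hXne
    set n := maxd 𝒞 X with hn
    have htopX : ∀ f ∈ X, depth 𝒞 X f ≤ n := fun f hf => depth_le_maxd hfinX hf
    have hn1 : 1 ≤ n := he₀d ▸ depth_pos h𝒞 hX he₀
    set a := 𝒞.label e₀ with ha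
    rcases probe h𝒞 h𝒟 hR hXY htopX he₀ he₀d ih with hgood |
      ⟨k, c, hc1, hk1, hkn, ⟨bw, hbwY, hbwd⟩, hEqO, hEqn, hEqk, hano⟩
    · exact hgood
    · exfalso
      have hkn' : k < n :=
        lt_of_le_of_ne (hbwd ▸ (depth_le_maxd hfinY hbwY).trans hd) hkn
      have htopY : ∀ f ∈ Y, depth 𝒟 Y f ≤ n := fun f hf =>
        (depth_le_maxd hfinY hf).trans hd
      have hRflip := rhesb_flip hR
      have ih' : ∀ (Y' : Set E₂) (X' : Set E₁), R X' Y' →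
          Y'.ncard + X'.ncard < Y.ncard + X.ncard →
          ∀ j, labelMS 𝒟 (levelEq 𝒟 Y' j) = labelMS 𝒞 (levelEq 𝒞 X' j) :=
        fun Y' X' h hsz j => (ih X' Y' h (by omega) j).symm
      -- level n of Y is empty
      have hYn : levelEq 𝒟 Y n = ∅ := by
        by_contra hne
        obtain ⟨f₀, hf₀⟩ := Set.nonempty_iff_ne_empty.mpr hne
        rcases probe h𝒟 h𝒞 hRflip hXY htopY hf₀.1 hf₀.2 ih' with hgood2 |
          ⟨k₂, c₂, hc₂1, -, hk₂n, -, -, hEq2n, -, -⟩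
        · have h2 : labelMS 𝒞 (levelEq 𝒞 X n) =
              labelMS 𝒞 (levelEq 𝒞 X n) + Multiset.replicate c a := by
            conv_lhs => rw [hEqn, hgood2 n]
          have := congrArg Multiset.card h2
          rw [Multiset.card_add, Multiset.card_replicate] at this
          omega
        · have h2 : labelMS 𝒞 (levelEq 𝒞 X n) =
              labelMS 𝒞 (levelEq 𝒞 X n) +
                Multiset.replicate c₂ (𝒟.label f₀) + Multiset.replicate c a := by
            conv_lhs => rw [hEqn, hEq2n]
          have := congrArg Multiset.card h2
          rw [Multiset.card_add, Multiset.card_add, Multiset.card_replicate,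
            Multiset.card_replicate] at this
          omega
      have hVn0 : labelMS 𝒟 (levelEq 𝒟 Y n) = 0 := by rw [hYn, labelMS_empty]
      have hUn : labelMS 𝒞 (levelEq 𝒞 X n) = Multiset.replicate c a := by
        rw [hEqn, hVn0, zero_add]
      have hn2 : 2 ≤ n := by omega
      obtain ⟨d₀, hd₀X, hd₀d⟩ := depth_pred h𝒞 hX he₀ (m := n - 1) (by omega)
        (by rw [he₀d]; omega)
      have htopY' : ∀ f ∈ Y, depth 𝒟 Y f ≤ n - 1 := by
        intro f hf
        have h1 := htopY f hf
        have h2 : depth 𝒟 Y f ≠ n := by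
          intro h
          have : f ∈ levelEq 𝒟 Y n := ⟨hf, h⟩
          rw [hYn] at this
          exact this
        omega
      have hfinLX : (levelEq 𝒞 X (n-1)).Finite := hfinX.subset (levelEq_subset 𝒞 X (n-1))
      have hfinLY : (levelEq 𝒟 Y (n-1)).Finite := hfinY.subset (levelEq_subset 𝒟 Y (n-1))
      have hU1 : 1 ≤ (levelEq 𝒞 X (n-1)).ncard :=
        (Set.ncard_pos hfinLX).mpr ⟨d₀, hd₀X, hd₀d⟩
      -- Y's level n-1 is nonempty
      have hVne : (levelEq 𝒟 Y (n-1)).Nonempty := by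
        rw [← Set.ncard_pos hfinLY]
        by_cases h : n - 1 = k
        · rw [h]
          have := congrArg Multiset.card hEqk
          rw [Multiset.card_add, Multiset.card_replicate,
            labelMS_card 𝒟 (hfinY.subset (levelEq_subset 𝒟 Y k))] at this
          omega
        · have := congrArg Multiset.card (hEqO (n-1) (by omega) h)
          rw [labelMS_card 𝒞 hfinLX, labelMS_card 𝒟 hfinLY] at this
          omega
      -- the probe at level n-1 of Y, for any event there
      have hall : ∀ f₁ ∈ levelEq 𝒟 Y (n-1), 𝒟.label f₁ = a ∧
          ∃ c₂, 1 ≤ c₂ ∧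
            labelMS 𝒟 (levelEq 𝒟 Y (n-1)) =
              labelMS 𝒞 (levelEq 𝒞 X (n-1)) + Multiset.replicate c₂ a ∧
            a ∉ labelMS 𝒞 (levelEq 𝒞 X (n-1)) := by
        intro f₁ hf₁
        rcases probe h𝒟 h𝒞 hRflip hXY htopY' hf₁.1 hf₁.2 ih' with hgood3 |
          ⟨k₂, c₂, hc₂1, -, hk₂n, -, hEq3O, hEq3n, hEq3k, hano3⟩
        · exfalso
          have h2 := (hgood3 n).symm.trans hVn0
          rw [hUn] at h2
          have := congrArg Multiset.card h2
          rw [Multiset.card_replicate] at this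
          simp at this
          omega
        · have hk₂ : k₂ = n := by
            by_contra hne
            have h2 := (hEq3O n (by omega) (fun h => hne h.symm)).symm.trans hVn0
            rw [hUn] at h2
            have := congrArg Multiset.card h2
            rw [Multiset.card_replicate] at this
            simp at this
            omega
          rw [hk₂] at hEq3k
          rw [hUn, hVn0, zero_add] at hEq3k
          -- hEq3k : replicate c a = replicate c₂ (label f₁)
          have hmem : a ∈ Multiset.replicate c₂ (𝒟.label f₁) := by
            rw [← hEq3k]
            exact Multiset.mem_replicate.mpr ⟨by omega, rfl⟩
          have hab : 𝒟.label f₁ = a := (Multiset.eq_of_mem_replicate hmem).symm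
          rw [hab] at hEq3n hano3
          exact ⟨hab, c₂, hc₂1, hEq3n, hano3⟩
      obtain ⟨f₁, hf₁⟩ := hVne
      obtain ⟨-, c₂, hc₂1, hkey, hanoU⟩ := hall f₁ hf₁
      -- level n-1 of Y is all `a`-labelled
      have hVrep : labelMS 𝒟 (levelEq 𝒟 Y (n-1)) =
          Multiset.replicate (levelEq 𝒟 Y (n-1)).ncard a :=
        labelMS_replicate 𝒟 hfinLY (fun f hf => (hall f hf).1)
      -- contradiction: label of d₀ is in U(n-1) ⊆ V(n-1) = all a's, but a ∉ U(n-1)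
      have hmemU : 𝒞.label d₀ ∈ labelMS 𝒞 (levelEq 𝒞 X (n-1)) :=
        (mem_labelMS hfinLX).mpr ⟨d₀, ⟨hd₀X, hd₀d⟩, rfl⟩
      have hmemV : 𝒞.label d₀ ∈ labelMS 𝒟 (levelEq 𝒟 Y (n-1)) := by
        rw [hkey]
        exact Multiset.mem_add.mpr (Or.inl hmemU)
      rw [hVrep] at hmemV
      have : 𝒞.label d₀ = a := Multiset.eq_of_mem_replicate hmemV
      rw [this] at hmemU
      exact hanoU hmemU

end Stmt14

namespace Stmt14

lemma main {L : Type v} : ∀ (N : ℕ) {E₁ E₂ : Type u} (𝒞 : CS E₁ L) (𝒟 : CS E₂ L),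
    IsStable 𝒞 → IsStable 𝒟 → ∀ R : Set E₁ → Set E₂ → Prop, IsRHESB 𝒞 𝒟 R →
    ∀ (X : Set E₁) (Y : Set E₂), R X Y → X.ncard + Y.ncard ≤ N →
    ∀ j, labelMS 𝒞 (levelEq 𝒞 X j) = labelMS 𝒟 (levelEq 𝒟 Y j) := by
  intro N
  induction N with
  | zero =>
    intro E₁ E₂ 𝒞 𝒟 h𝒞 h𝒟 R hR X Y hXY hsz j
    have hX : X ∈ 𝒞.C := (hR.1.2 X Y hXY).1
    have hY : Y ∈ 𝒟.C := (hR.1.2 X Y hXY).2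
    have hXE : X = ∅ := (Set.ncard_eq_zero (𝒞.finite X hX)).mp (by omega)
    have hYE : Y = ∅ := (Set.ncard_eq_zero (𝒟.finite Y hY)).mp (by omega)
    rw [hXE, hYE, levelEq_empty, levelEq_empty, labelMS_empty, labelMS_empty]
  | succ N ihN =>
    intro E₁ E₂ 𝒞 𝒟 h𝒞 h𝒟 R hR X Y hXY hsz
    have ih : ∀ (X' : Set E₁) (Y' : Set E₂), R X' Y' →
        X'.ncard + Y'.ncard < X.ncard + Y.ncard →
        ∀ j, labelMS 𝒞 (levelEq 𝒞 X' j) = labelMS 𝒟 (levelEq 𝒟 Y' j) :=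
      fun X' Y' h hlt => ihN 𝒞 𝒟 h𝒞 h𝒟 R hR X' Y' h (by omega)
    by_cases hcase : maxd 𝒟 Y ≤ maxd 𝒞 X
    · exact aux h𝒞 h𝒟 hR hXY hcase ih
    · intro j
      have ih' : ∀ (Y' : Set E₂) (X' : Set E₁), R X' Y' →
          Y'.ncard + X'.ncard < Y.ncard + X.ncard →
          ∀ j, labelMS 𝒟 (levelEq 𝒟 Y' j) = labelMS 𝒞 (levelEq 𝒞 X' j) :=
        fun Y' X' h hlt j => (ih X' Y' h (by omega) j).symm
      exact (aux h𝒟 h𝒞 (rhesb_flip hR) hXY (by omega) ih' j).symm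

end Stmt14




/-- configurations related by an RHESB have equal multisets of
labels at each depth level. -/
theorem stmt14 {E₁ E₂ : Type u} {L : Type v} (𝒞 : CS E₁ L) (𝒟 : CS E₂ L)
    (h𝒞 : IsStable 𝒞) (h𝒟 : IsStable 𝒟)
    (R : Set E₁ → Set E₂ → Prop) (hR : IsRHESB 𝒞 𝒟 R)
    (X : Set E₁) (Y : Set E₂) (hXY : R X Y) :
    ∀ n : ℕ, labelMS 𝒞 (levelEq 𝒞 X n) = labelMS 𝒟 (levelEq 𝒟 Y n) :=
  Stmt14.main (X.ncard + Y.ncard) 𝒞 𝒟 h𝒞 h𝒟 R hR X Y hXY le_rfl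
end

section
/- Let R be a reverse homogeneous equidepth step bisimulation between stable configuration structures C and D. If X —a,k→ X' and Y —a,k'→ Y' with R(X, Y) and R(X', Y'), then k = k'. -/
universe u v

open CS


section Aux

open CS

variable {E : Type u} {L : Type v}

namespace CS

theorem le_refl' (𝒞 : CS E L) (X : Set E) (e : E) : le 𝒞 X e e :=
  fun _ _ _ he => he

theorem le_trans' (𝒞 : CS E L) (X : Set E) {d e f : E}
    (h1 : le 𝒞 X d e) (h2 : le 𝒞 X e f) : le 𝒞 X d f :=
  fun Y hY hYX hf => h1 Y hY hYX (h2 Y hY hYX hf)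

theorem le_mem (𝒞 : CS E L) {X : Set E} (hX : X ∈ 𝒞.C) {d e : E}
    (he : e ∈ X) (h : le 𝒞 X d e) : d ∈ X :=
  h X hX (subset_refl X) he

/-- restriction of causality to sub-configurations (needs stability). -/
theorem le_restrict (𝒞 : CS E L) (hst : IsStable 𝒞) {X₁ X : Set E}
    (h1 : X₁ ∈ 𝒞.C) (h2 : X ∈ 𝒞.C) (hsub : X₁ ⊆ X) {d e : E} (he : e ∈ X₁) :
    le 𝒞 X₁ d e ↔ le 𝒞 X d e := by
  constructor
  · intro h Y hY hYX heY
    have hint : X₁ ∩ Y ∈ 𝒞.C := hst.2.2.2 X₁ h1 Y hY X h2 (Set.union_subset hsub hYX)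
    exact (h (X₁ ∩ Y) hint Set.inter_subset_left ⟨he, heY⟩).2
  · intro h Y hY hYX heY
    exact h Y hY (hYX.trans hsub) heY

theorem le_antisymm' (𝒞 : CS E L) (hst : IsStable 𝒞) :
    ∀ n (X : Set E), X ∈ 𝒞.C → X.ncard = n → ∀ d e, d ∈ X → e ∈ X → d ≠ e →
      le 𝒞 X d e → le 𝒞 X e d → False := by
  intro n
  induction n using Nat.strong_induction_on with
  | _ n IH =>
    intro X hX hcard d e hd he hne h1 h2
    have hfin : X.Finite := 𝒞.finite X hX
    have hne' : X ≠ ∅ := fun h => by simp [h] at hd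
    obtain ⟨f, hf, hXf⟩ := hst.2.1 X hX hne'
    by_cases hfd : f = d
    · subst hfd
      exact (h1 (X \ {f}) hXf Set.diff_subset ⟨he, fun h => hne (h ▸ rfl)⟩).2 rfl
    by_cases hfe : f = e
    · subst hfe
      exact (h2 (X \ {f}) hXf Set.diff_subset ⟨hd, fun h => hne.symm (h ▸ rfl)⟩).2 rfl
    · have hsub : X \ {f} ⊆ X := Set.diff_subset
      have hd1 : d ∈ X \ {f} := ⟨hd, fun h => hfd (by simpa using h.symm)⟩
      have he1 : e ∈ X \ {f} := ⟨he, fun h => hfe (by simpa using h.symm)⟩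
      have hlt : (X \ {f}).ncard < n := by
        subst hcard
        exact Set.ncard_diff_singleton_lt_of_mem hf hfin
      exact IH _ hlt (X \ {f}) hXf rfl d e hd1 he1 hne
        ((le_restrict 𝒞 hst hXf hX hsub he1).mpr h1)
        ((le_restrict 𝒞 hst hXf hX hsub hd1).mpr h2)

theorem lt_asymm' (𝒞 : CS E L) (hst : IsStable 𝒞) {X : Set E} (hX : X ∈ 𝒞.C)
    {d e : E} (hd : d ∈ X) (he : e ∈ X) (h1 : lt 𝒞 X d e) (h2 : lt 𝒞 X e d) : False :=
  le_antisymm' 𝒞 hst X.ncard X hX rfl d e hd he h1.2 h1.1 h2.1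

theorem lt_trans' (𝒞 : CS E L) (hst : IsStable 𝒞) {X : Set E} (hX : X ∈ 𝒞.C)
    {d e f : E} (hd : d ∈ X) (he : e ∈ X) (h1 : lt 𝒞 X d e) (h2 : lt 𝒞 X e f) :
    lt 𝒞 X d f := by
  refine ⟨le_trans' 𝒞 X h1.1 h2.1, fun hdf => ?_⟩
  subst hdf
  exact lt_asymm' 𝒞 hst hX hd he h1 ⟨h2.1, h2.2⟩

theorem lt_restrict (𝒞 : CS E L) (hst : IsStable 𝒞) {X₁ X : Set E}
    (h1 : X₁ ∈ 𝒞.C) (h2 : X ∈ 𝒞.C) (hsub : X₁ ⊆ X) {d e : E} (he : e ∈ X₁) :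
    lt 𝒞 X₁ d e ↔ lt 𝒞 X d e := by
  unfold lt
  rw [le_restrict 𝒞 hst h1 h2 hsub he]


theorem chain'_le_last (𝒞 : CS E L) (X : Set E) {e : E} :
    ∀ l : List E, l.Chain' (lt 𝒞 X) → l.getLast? = some e → ∀ x ∈ l, le 𝒞 X x e := by
  intro l
  induction l with
  | nil => intro _ h; simp at h
  | cons a t IH =>
    intro hc hl x hx
    cases t with
    | nil =>
      simp at hl hx
      subst hl; subst hx; exact le_refl' 𝒞 X _
    | cons b t' =>
      rw [List.getLast?_cons_cons] at hl
      simp only [List.Chain', List.isChain_cons_cons] at hc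
      rcases List.mem_cons.mp hx with h | h
      · subst h
        exact le_trans' 𝒞 X hc.1.1 (IH hc.2 hl b List.mem_cons_self)
      · exact IH hc.2 hl x h

theorem chain'_cons_le (𝒞 : CS E L) (X : Set E) :
    ∀ (l : List E) (d : E), (d :: l).Chain' (lt 𝒞 X) → ∀ x ∈ l, le 𝒞 X d x := by
  intro l
  induction l with
  | nil => intro d _ x hx; simp at hx
  | cons b t IH =>
    intro d hc x hx
    simp only [List.Chain', List.isChain_cons_cons] at hc
    rcases List.mem_cons.mp hx with h | h
    · subst h; exact hc.1.1
    · exact le_trans' 𝒞 X hc.1.1 (IH b hc.2 x h)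

theorem chain'_nodup (𝒞 : CS E L) (hst : IsStable 𝒞) {X : Set E} (hX : X ∈ 𝒞.C) :
    ∀ l : List E, l.Chain' (lt 𝒞 X) → (∀ x ∈ l, x ∈ X) → l.Nodup := by
  intro l
  induction l with
  | nil => intro _ _; exact List.nodup_nil
  | cons a t IH =>
    intro hc hm
    have hct : t.Chain' (lt 𝒞 X) := hc.tail
    refine List.nodup_cons.mpr ⟨fun hat => ?_, IH hct (fun x hx => hm x (List.mem_cons_of_mem a hx))⟩
    cases t with
    | nil => simp at hat
    | cons b t' =>
      simp only [List.Chain', List.isChain_cons_cons] at hc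
      rcases List.mem_cons.mp hat with h | h
      · exact hc.1.2 h
      · have hba : le 𝒞 X b a := chain'_cons_le 𝒞 X t' b hct a h
        exact le_antisymm' 𝒞 hst X.ncard X hX rfl a b
          (hm a List.mem_cons_self) (hm b (by simp))
          hc.1.2 hc.1.1 hba

theorem chain'_length_le (𝒞 : CS E L) (hst : IsStable 𝒞) {X : Set E} (hX : X ∈ 𝒞.C)
    (l : List E) (hc : l.Chain' (lt 𝒞 X)) (hm : ∀ x ∈ l, x ∈ X) :
    l.length ≤ X.ncard := by
  classical
  have hfin : X.Finite := 𝒞.finite X hX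
  have hnd : l.Nodup := chain'_nodup 𝒞 hst hX l hc hm
  rw [Set.ncard_eq_toFinset_card X hfin]
  calc l.length = l.toFinset.card := (List.toFinset_card_of_nodup hnd).symm
    _ ≤ hfin.toFinset.card := Finset.card_le_card
        (fun x hx => (Set.Finite.mem_toFinset hfin).mpr (hm x (List.mem_toFinset.mp hx)))

/-- the set of chain lengths defining `depth`. -/
def dSet (𝒞 : CS E L) (X : Set E) (e : E) : Set ℕ :=
  {n | ∃ l : List E, l.length = n ∧ l.Chain' (lt 𝒞 X) ∧ (∀ x ∈ l, x ∈ X) ∧ l.getLast? = some e}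

theorem depth_eq_sSup (𝒞 : CS E L) (X : Set E) (e : E) :
    depth 𝒞 X e = sSup (dSet 𝒞 X e) := rfl

theorem dSet_nonempty (𝒞 : CS E L) {X : Set E} {e : E} (he : e ∈ X) :
    1 ∈ dSet 𝒞 X e :=
  ⟨[e], rfl, List.isChain_singleton e, by simpa using he, rfl⟩

theorem dSet_bddAbove (𝒞 : CS E L) (hst : IsStable 𝒞) {X : Set E} (hX : X ∈ 𝒞.C) (e : E) :
    BddAbove (dSet 𝒞 X e) := by
  refine ⟨X.ncard, fun n hn => ?_⟩
  obtain ⟨l, hl, hc, hm, -⟩ := hn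
  exact hl ▸ chain'_length_le 𝒞 hst hX l hc hm

theorem depth_spec (𝒞 : CS E L) (hst : IsStable 𝒞) {X : Set E} (hX : X ∈ 𝒞.C)
    {e : E} (he : e ∈ X) : depth 𝒞 X e ∈ dSet 𝒞 X e :=
  Nat.sSup_mem ⟨1, dSet_nonempty 𝒞 he⟩ (dSet_bddAbove 𝒞 hst hX e)

theorem depth_pos (𝒞 : CS E L) (hst : IsStable 𝒞) {X : Set E} (hX : X ∈ 𝒞.C)
    {e : E} (he : e ∈ X) : 1 ≤ depth 𝒞 X e :=
  le_csSup (dSet_bddAbove 𝒞 hst hX e) (dSet_nonempty 𝒞 he)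

theorem depth_lt_depth (𝒞 : CS E L) (hst : IsStable 𝒞) {X : Set E} (hX : X ∈ 𝒞.C)
    {d e : E} (hd : d ∈ X) (he : e ∈ X) (h : lt 𝒞 X d e) :
    depth 𝒞 X d < depth 𝒞 X e := by
  obtain ⟨l, hl, hc, hm, hlast⟩ := depth_spec 𝒞 hst hX hd
  have hmem : depth 𝒞 X d + 1 ∈ dSet 𝒞 X e := by
    refine ⟨l ++ [e], by simp [hl], ?_, ?_, List.getLast?_concat⟩
    · simp only [List.Chain', List.isChain_append]
      refine ⟨hc, List.isChain_singleton e, fun x hx y hy => ?_⟩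
      rw [hlast] at hx
      simp at hx hy
      subst hx; subst hy; exact h
    · intro x hx
      rcases List.mem_append.mp hx with h' | h'
      · exact hm x h'
      · simp at h'; subst h'; exact he
  have h2 : depth 𝒞 X d + 1 ≤ depth 𝒞 X e := le_csSup (dSet_bddAbove 𝒞 hst hX e) hmem
  omega

theorem chain'_imp_mem {α : Type*} {P : α → Prop} {R S : α → α → Prop}
    (h : ∀ x y, P y → R x y → S x y) :
    ∀ l : List α, (∀ x ∈ l, P x) → l.Chain' R → l.Chain' S := by
  intro l
  induction l with
  | nil => intro _ _; exact List.isChain_nil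
  | cons a t IH =>
    intro hm hc
    cases t with
    | nil => exact List.isChain_singleton a
    | cons b t' =>
      simp only [List.Chain', List.isChain_cons_cons] at hc ⊢
      exact ⟨h a b (hm b (by simp)) hc.1,
        IH (fun x hx => hm x (List.mem_cons_of_mem a hx)) hc.2⟩

theorem depth_restrict (𝒞 : CS E L) (hst : IsStable 𝒞) {X₁ X : Set E}
    (h1 : X₁ ∈ 𝒞.C) (h2 : X ∈ 𝒞.C) (hsub : X₁ ⊆ X) {e : E} (he : e ∈ X₁) :
    depth 𝒞 X₁ e = depth 𝒞 X e := by
  have hset : dSet 𝒞 X₁ e = dSet 𝒞 X e := by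
    ext n
    constructor
    · rintro ⟨l, hl, hc, hm, hlast⟩
      refine ⟨l, hl, ?_, fun x hx => hsub (hm x hx), hlast⟩
      exact chain'_imp_mem (fun x y hy hxy =>
        (lt_restrict 𝒞 hst h1 h2 hsub hy).mp hxy) l hm hc
    · rintro ⟨l, hl, hc, hm, hlast⟩
      have hm1 : ∀ x ∈ l, x ∈ X₁ := by
        intro x hx
        exact chain'_le_last 𝒞 X l hc hlast x hx X₁ h1 hsub he
      refine ⟨l, hl, ?_, hm1, hlast⟩
      exact chain'_imp_mem (fun x y hy hxy =>
        (lt_restrict 𝒞 hst h1 h2 hsub hy).mpr hxy) l hm1 hc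
  rw [depth_eq_sSup, depth_eq_sSup, hset]


/-- the principal ideal (downward closure) of an event. -/
def idl (𝒞 : CS E L) (X : Set E) (e : E) : Set E := {d | le 𝒞 X d e}

theorem idl_subset (𝒞 : CS E L) {X : Set E} (hX : X ∈ 𝒞.C) {e : E} (he : e ∈ X) :
    idl 𝒞 X e ⊆ X := fun _ hd => le_mem 𝒞 hX he hd

theorem idl_mem (𝒞 : CS E L) (X : Set E) (e : E) : e ∈ idl 𝒞 X e := le_refl' 𝒞 X e

theorem idl_mem_C (𝒞 : CS E L) (hst : IsStable 𝒞) :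
    ∀ n (X : Set E), X ∈ 𝒞.C → X.ncard = n → ∀ e ∈ X, idl 𝒞 X e ∈ 𝒞.C := by
  intro n
  induction n using Nat.strong_induction_on with
  | _ n IH =>
    intro X hX hcard e he
    by_cases h : ∀ d ∈ X, le 𝒞 X d e
    · have : idl 𝒞 X e = X := Set.Subset.antisymm (idl_subset 𝒞 hX he) (fun d hd => h d hd)
      rw [this]; exact hX
    · push_neg at h
      obtain ⟨d, hdX, hd⟩ := h
      unfold le at hd
      push_neg at hd
      obtain ⟨Y, hY, hYX, heY, hdY⟩ := hd
      have hid : idl 𝒞 X e = idl 𝒞 Y e := by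
        ext x
        exact (le_restrict 𝒞 hst hY hX hYX heY).symm
      have hYss : Y.ncard < n := by
        subst hcard
        exact Set.ncard_lt_ncard (Set.ssubset_iff_of_subset hYX |>.mpr ⟨d, hdX, hdY⟩)
          (𝒞.finite X hX)
      rw [hid]
      exact IH _ hYss Y hY rfl e heY

/-- downward-closed subsets of configurations are configurations. -/
theorem dc_mem_C (𝒞 : CS E L) (hst : IsStable 𝒞) :
    ∀ n (X Z : Set E), X ∈ 𝒞.C → Z ⊆ X → Z.ncard = n →
      (∀ d e, e ∈ Z → le 𝒞 X d e → d ∈ Z) → Z ∈ 𝒞.C := by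
  intro n
  induction n using Nat.strong_induction_on with
  | _ n IH =>
    intro X Z hX hZX hcard hdc
    have hfinX : X.Finite := 𝒞.finite X hX
    have hfinZ : Z.Finite := hfinX.subset hZX
    rcases Set.eq_empty_or_nonempty Z with hZ | hZ
    · rw [hZ]; exact hst.1
    · obtain ⟨e, heZ, hemax⟩ := Set.exists_max_image Z (depth 𝒞 X) hfinZ hZ
      have heX : e ∈ X := hZX heZ
      have hZ' : Z \ {e} ∈ 𝒞.C := by
        refine IH (Z \ {e}).ncard ?_ X (Z \ {e}) hX (Set.diff_subset.trans hZX) rfl ?_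
        · subst hcard
          exact Set.ncard_diff_singleton_lt_of_mem heZ hfinZ
        · intro d f hf hdf
          have hdZ : d ∈ Z := hdc d f hf.1 hdf
          refine ⟨hdZ, fun hde => ?_⟩
          simp only [Set.mem_singleton_iff] at hde
          subst hde
          have hfe : f ≠ d := fun h => hf.2 (by simp [h])
          have : depth 𝒞 X d < depth 𝒞 X f :=
            depth_lt_depth 𝒞 hst hX (hZX hdZ) (hZX hf.1) ⟨hdf, fun h => hfe h.symm⟩
          exact absurd (hemax f hf.1) (by omega)
      have hidl : idl 𝒞 X e ∈ 𝒞.C := idl_mem_C 𝒞 hst X.ncard X hX rfl e heX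
      have hunion : Z \ {e} ∪ idl 𝒞 X e = Z := by
        apply Set.Subset.antisymm
        · rintro x (hx | hx)
          · exact hx.1
          · exact hdc x e heZ hx
        · intro x hx
          by_cases hxe : x = e
          · exact Or.inr (hxe ▸ idl_mem 𝒞 X e)
          · exact Or.inl ⟨hx, hxe⟩
      have := hst.2.2.1 (Z \ {e}) hZ' (idl 𝒞 X e) hidl X hX
        (Set.union_subset (Set.diff_subset.trans hZX) (idl_subset 𝒞 hX heX))
      rwa [hunion] at this


theorem depth_pred (𝒞 : CS E L) (hst : IsStable 𝒞) {X : Set E} (hX : X ∈ 𝒞.C)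
    {e : E} (he : e ∈ X) {n : ℕ} (hdep : depth 𝒞 X e = n + 1) (hn : 1 ≤ n) :
    ∃ d ∈ X, depth 𝒞 X d = n := by
  obtain ⟨l, hl, hc, hm, hlast⟩ := depth_spec 𝒞 hst hX he
  rw [hdep] at hl
  have h0 : l ≠ [] := by intro h; subst h; simp at hl
  have hlaste : l.getLast h0 = e := by
    rw [List.getLast?_eq_getLast h0] at hlast
    exact Option.some_injective _ hlast
  have hdl : l.dropLast.length = n := by simp [hl]
  have h1 : l.dropLast ≠ [] := by
    intro h
    rw [h] at hdl
    simp at hdl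
    omega
  set d := l.dropLast.getLast h1 with hd
  have hdlast : l.dropLast.getLast? = some d := List.getLast?_eq_getLast h1
  have hdmem : d ∈ X := hm d (List.dropLast_subset l (List.getLast_mem h1))
  have hsplit : l.dropLast ++ [e] = l := by
    rw [← hlaste]
    exact List.dropLast_append_getLast h0
  have hc' : (l.dropLast ++ [e]).Chain' (lt 𝒞 X) := by rw [hsplit]; exact hc
  simp only [List.Chain', List.isChain_append] at hc'
  have hlt : lt 𝒞 X d e := by
    apply hc'.2.2 d (by rw [hdlast]; rfl) e
    rfl
  have hge : n ≤ depth 𝒞 X d :=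
    le_csSup (dSet_bddAbove 𝒞 hst hX d)
      ⟨l.dropLast, hdl, hc'.1, fun x hx => hm x (List.dropLast_subset l hx), hdlast⟩
  have hlt2 : depth 𝒞 X d < depth 𝒞 X e := depth_lt_depth 𝒞 hst hX hdmem he hlt
  exact ⟨d, hdmem, by omega⟩

theorem level_nonempty (𝒞 : CS E L) (hst : IsStable 𝒞) {X : Set E} (hX : X ∈ 𝒞.C) :
    ∀ m, ∀ e ∈ X, depth 𝒞 X e = m → ∀ k, 1 ≤ k → k ≤ m → ∃ d ∈ X, depth 𝒞 X d = k := by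
  intro m
  induction m using Nat.strong_induction_on with
  | _ m IH =>
    intro e he hdep k hk1 hkm
    rcases eq_or_lt_of_le hkm with h | h
    · exact ⟨e, he, h ▸ hdep⟩
    · have hm2 : 2 ≤ m := by omega
      obtain ⟨m', rfl⟩ : ∃ m', m = m' + 1 := ⟨m - 1, by omega⟩
      obtain ⟨d, hd, hdd⟩ := depth_pred 𝒞 hst hX he hdep (by omega)
      exact IH m' (by omega) d hd hdd k hk1 (by omega)

/-- number of events of `X` at depth `n` with label `c`. -/
noncomputable def cnt (𝒞 : CS E L) (X : Set E) (n : ℕ) (c : L) : ℕ :=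
  {e ∈ X | depth 𝒞 X e = n ∧ 𝒞.label e = c}.ncard

open Classical in
theorem cnt_split (𝒞 : CS E L) (hst : IsStable 𝒞) {X₁ X : Set E} {m : ℕ} {b : L}
    (h1 : X₁ ∈ 𝒞.C) (h2 : X ∈ 𝒞.C) (hsub : X₁ ⊆ X)
    (hd : ∀ e ∈ X \ X₁, depth 𝒞 X e = m ∧ 𝒞.label e = b) (n : ℕ) (c : L) :
    cnt 𝒞 X n c = cnt 𝒞 X₁ n c + (if n = m ∧ c = b then (X \ X₁).ncard else 0) := by
  classical
  have hfinX : X.Finite := 𝒞.finite X h2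
  have hA1fin : {e ∈ X₁ | depth 𝒞 X₁ e = n ∧ 𝒞.label e = c}.Finite :=
    (hfinX.subset hsub).subset (fun x hx => hx.1)
  have hkey : ∀ e ∈ X₁, depth 𝒞 X e = depth 𝒞 X₁ e := fun e he =>
    (depth_restrict 𝒞 hst h1 h2 hsub he).symm
  by_cases hcond : n = m ∧ c = b
  · obtain ⟨rfl, rfl⟩ := hcond
    rw [if_pos (⟨rfl, rfl⟩ : n = n ∧ c = c)]
    have hseteq : {e ∈ X | depth 𝒞 X e = n ∧ 𝒞.label e = c} =
        {e ∈ X₁ | depth 𝒞 X₁ e = n ∧ 𝒞.label e = c} ∪ (X \ X₁) := by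
      ext e
      constructor
      · rintro ⟨heX, hdep, hlab⟩
        by_cases he1 : e ∈ X₁
        · exact Or.inl ⟨he1, by rw [← hkey e he1]; exact hdep, hlab⟩
        · exact Or.inr ⟨heX, he1⟩
      · rintro (⟨he1, hdep, hlab⟩ | he)
        · exact ⟨hsub he1, by rw [hkey e he1]; exact hdep, hlab⟩
        · exact ⟨he.1, (hd e he).1, (hd e he).2⟩
    have hdisj : Disjoint {e ∈ X₁ | depth 𝒞 X₁ e = n ∧ 𝒞.label e = c} (X \ X₁) :=
      Set.disjoint_left.mpr (fun e he1 he2 => he2.2 he1.1)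
    rw [cnt, cnt, hseteq, Set.ncard_union_eq hdisj hA1fin hfinX.diff]
  · rw [if_neg hcond]
    have hseteq : {e ∈ X | depth 𝒞 X e = n ∧ 𝒞.label e = c} =
        {e ∈ X₁ | depth 𝒞 X₁ e = n ∧ 𝒞.label e = c} := by
      ext e
      constructor
      · rintro ⟨heX, hdep, hlab⟩
        by_cases he1 : e ∈ X₁
        · exact ⟨he1, by rw [← hkey e he1]; exact hdep, hlab⟩
        · refine absurd ?_ hcond
          have h3 := hd e ⟨heX, he1⟩
          exact ⟨hdep ▸ h3.1.symm ▸ rfl, by rw [← hlab, h3.2]⟩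
      · rintro ⟨he1, hdep, hlab⟩
        exact ⟨hsub he1, by rw [hkey e he1]; exact hdep, hlab⟩
    rw [cnt, cnt, hseteq, Nat.add_zero]


theorem cnt_ne_zero (𝒞 : CS E L) {X : Set E} (hX : X ∈ 𝒞.C) {e : E} (he : e ∈ X)
    {n : ℕ} {c : L} (hd : depth 𝒞 X e = n) (hl : 𝒞.label e = c) : cnt 𝒞 X n c ≠ 0 := by
  have hfin : {x ∈ X | depth 𝒞 X x = n ∧ 𝒞.label x = c}.Finite :=
    (𝒞.finite X hX).subset (fun x hx => hx.1)
  have : 0 < cnt 𝒞 X n c := (Set.ncard_pos hfin).mpr ⟨e, he, hd, hl⟩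
  omega

open Classical in
/-- the key construction: reversing the (nonempty) top class at `(m, b)` and
matching it through the bisimulation. -/
theorem run {E' : Type u} (𝒞 : CS E L) (𝒟 : CS E' L)
    (hst𝒞 : IsStable 𝒞) (hst𝒟 : IsStable 𝒟) (S : Set E → Set E' → Prop)
    {X : Set E} {Y : Set E'} (hX : X ∈ 𝒞.C) (hY : Y ∈ 𝒟.C)
    (hmatch : ∀ A X', Hom A → REqStep 𝒞 A X X' → ∃ Y', REqStep 𝒟 A Y Y' ∧ S X' Y')
    {m : ℕ} {b : L} (hmtop : ∀ e ∈ X, depth 𝒞 X e ≤ m) (hb : cnt 𝒞 X m b ≠ 0) :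
    ∃ X₁ Y₁ m1 r, S X₁ Y₁ ∧ X₁ ∈ 𝒞.C ∧ Y₁ ∈ 𝒟.C ∧
      X₁.ncard < X.ncard ∧ Y₁.ncard < Y.ncard ∧ 0 < r ∧ r = cnt 𝒞 X m b ∧ 1 ≤ m1 ∧
      (∀ n c, cnt 𝒞 X n c = cnt 𝒞 X₁ n c + (if n = m ∧ c = b then r else 0)) ∧
      (∀ n c, cnt 𝒟 Y n c = cnt 𝒟 Y₁ n c + (if n = m1 ∧ c = b then r else 0)) := by
  have hfinX : X.Finite := 𝒞.finite X hX
  have hfinY : Y.Finite := 𝒟.finite Y hY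
  set A : Set E := {e ∈ X | depth 𝒞 X e = m ∧ 𝒞.label e = b} with hA
  have hAX : A ⊆ X := fun e he => he.1
  have hfinA : A.Finite := hfinX.subset hAX
  have hAne : A.Nonempty := by
    rw [← Set.ncard_pos hfinA]
    have : cnt 𝒞 X m b = A.ncard := rfl
    omega
  set X₁ : Set E := X \ A with hX₁
  have hX₁sub : X₁ ⊆ X := Set.diff_subset
  have hXdiff : X \ X₁ = A := by
    rw [hX₁, Set.diff_diff_right, Set.diff_self, Set.empty_union, Set.inter_eq_self_of_subset_right hAX]
  have hX₁C : X₁ ∈ 𝒞.C := by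
    refine dc_mem_C 𝒞 hst𝒞 X₁.ncard X X₁ hX hX₁sub rfl ?_
    intro d e he hle
    have hdX : d ∈ X := le_mem 𝒞 hX (hX₁sub he) hle
    refine ⟨hdX, fun hdA => ?_⟩
    have hde : d ≠ e := fun h => he.2 (h ▸ hdA)
    have : depth 𝒞 X d < depth 𝒞 X e :=
      depth_lt_depth 𝒞 hst𝒞 hX hdX (hX₁sub he) ⟨hle, hde⟩
    have h2 := hmtop e (hX₁sub he)
    have h3 := hdA.2.1
    omega
  set F : Finset E := hfinA.toFinset with hF
  have hFcoe : (↑F : Set E) = A := Set.Finite.coe_toFinset hfinA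
  set Amul : Multiset L := F.val.map 𝒞.label with hAmul
  have hAmul_mem : ∀ x ∈ Amul, x = b := by
    intro x hx
    obtain ⟨e, heF, rfl⟩ := Multiset.mem_map.mp hx
    exact ((hfinA.mem_toFinset).mp heF).2.2
  have hHom : Hom Amul := fun x hx y hy => (hAmul_mem x hx).trans (hAmul_mem y hy).symm
  have hr : Amul.card = A.ncard := by
    rw [hAmul, Multiset.card_map, Set.ncard_eq_toFinset_card A hfinA]
    rfl
  have hstep : EqStep 𝒞 Amul X₁ X := by
    refine ⟨⟨hX₁C, hX, hX₁sub, F, by rw [hFcoe, hXdiff], ?_, rfl⟩, ?_⟩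
    · intro d hd e he
      have hdA : d ∈ A := (hfinA.mem_toFinset).mp hd
      have heA : e ∈ A := (hfinA.mem_toFinset).mp he
      constructor
      · intro hlt
        have := depth_lt_depth 𝒞 hst𝒞 hX hdA.1 heA.1 hlt
        rw [hdA.2.1, heA.2.1] at this
        omega
      · intro hlt
        have := depth_lt_depth 𝒞 hst𝒞 hX heA.1 hdA.1 hlt
        rw [hdA.2.1, heA.2.1] at this
        omega
    · intro d hd e he
      rw [hXdiff] at hd he
      rw [hd.2.1, he.2.1]
  obtain ⟨Y₁, hYstep, hS⟩ := hmatch Amul X₁ hHom hstep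
  obtain ⟨⟨hY₁C, hYC, hY₁sub, G, hGcoe, -, hGmap⟩, heqd⟩ := hYstep
  have hGcard : G.card = A.ncard := by
    have h5 := congrArg Multiset.card hGmap
    rw [Multiset.card_map] at h5
    exact h5.trans hr
  have hGne : G.Nonempty := by
    rw [← Finset.card_pos, hGcard, Set.ncard_pos hfinA]
    exact hAne
  obtain ⟨d0, hd0G⟩ := hGne
  have hd0 : d0 ∈ Y \ Y₁ := by rw [← hGcoe]; exact_mod_cast hd0G
  set m1 := depth 𝒟 Y d0 with hm1def
  have hm1 : 1 ≤ m1 := depth_pos 𝒟 hst𝒟 hYC hd0.1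
  have hlabG : ∀ e ∈ Y \ Y₁, 𝒟.label e = b := by
    intro e he
    have heG : e ∈ G := by rw [← Finset.mem_coe, hGcoe]; exact he
    have : 𝒟.label e ∈ Amul := hGmap ▸ Multiset.mem_map_of_mem 𝒟.label heG
    exact hAmul_mem _ this
  have hdepG : ∀ e ∈ Y \ Y₁, depth 𝒟 Y e = m1 := fun e he => heqd e he d0 hd0
  have haX : ∃ x, x ∈ X ∧ x ∉ X₁ := by
    obtain ⟨x, hx⟩ := hAne
    exact ⟨x, hx.1, fun h => h.2 hx⟩
  obtain ⟨x, hxX, hxX₁⟩ := haX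
  have hncX : X₁.ncard < X.ncard :=
    Set.ncard_lt_ncard ((Set.ssubset_iff_of_subset hX₁sub).mpr ⟨x, hxX, hxX₁⟩) hfinX
  have hncY : Y₁.ncard < Y.ncard :=
    Set.ncard_lt_ncard ((Set.ssubset_iff_of_subset hY₁sub).mpr ⟨d0, hd0.1, hd0.2⟩) hfinY
  refine ⟨X₁, Y₁, m1, A.ncard, hS, hX₁C, hY₁C, hncX, hncY,
    (Set.ncard_pos hfinA).mpr hAne, rfl, hm1, ?_, ?_⟩
  · intro n c
    have := cnt_split 𝒞 hst𝒞 hX₁C hX hX₁sub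
      (fun e he => (hXdiff ▸ he : e ∈ A).2) n c
    rwa [hXdiff] at this
  · intro n c
    have h6 := cnt_split 𝒟 hst𝒟 hY₁C hYC hY₁sub
      (fun e he => ⟨hdepG e he, hlabG e he⟩) n c
    have h7 : (Y \ Y₁).ncard = A.ncard := by
      rw [← hGcoe, Set.ncard_coe_finset, hGcard]
    rwa [h7] at h6



open Classical in
theorem combinatorial_le {L : Type v} (f g : ℕ → L → ℕ) (m M : ℕ) (hMm : M ≤ m)
    (hgM : ∀ n c, g n c ≠ 0 → n ≤ M)
    (hflev : ∀ n, 1 ≤ n → n ≤ m → ∃ c, f n c ≠ 0)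
    (hm : ∃ c, f m c ≠ 0)
    (hM : ∃ c, g M c ≠ 0)
    (hrunf : ∀ b, f m b ≠ 0 → (∀ n c, f n c = g n c) ∨ ∃ m1 r, 1 ≤ m1 ∧ 0 < r ∧
      m1 ≠ m ∧ r = f m b ∧
      ∀ n c, f n c + (if n = m1 ∧ c = b then r else 0) =
        g n c + (if n = m ∧ c = b then r else 0))
    (hrung : ∀ b, g M b ≠ 0 → (∀ n c, f n c = g n c) ∨ ∃ μ s, 1 ≤ μ ∧ 0 < s ∧
      μ ≠ M ∧ s = g M b ∧
      ∀ n c, g n c + (if n = μ ∧ c = b then s else 0) =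
        f n c + (if n = M ∧ c = b then s else 0)) :
    ∀ n c, f n c = g n c := by
  by_cases hcase : ∀ n c, f n c = g n c
  · exact hcase
  exfalso
  obtain ⟨b0, hb0⟩ := hm
  rcases hrunf b0 hb0 with h | ⟨m1, r, hm11, hrpos, hm1m, hrval, E1⟩
  · exact hcase h
  have hgmb0 : g m b0 = 0 := by
    have h1 := E1 m b0
    rw [if_neg (fun h => hm1m h.1.symm), if_pos ⟨rfl, rfl⟩] at h1
    omega
  have hgm1 : g m1 b0 = f m1 b0 + r := by
    have h1 := E1 m1 b0
    rw [if_pos ⟨rfl, rfl⟩, if_neg (fun h => hm1m h.1)] at h1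
    omega
  have hm1M : m1 ≤ M := hgM m1 b0 (by omega)
  rcases eq_or_lt_of_le hMm with hMeq | hMlt
  · -- m = M
    obtain ⟨c0, hc0⟩ := hM
    have hc0b0 : c0 ≠ b0 := fun h => hc0 (by rw [h, hMeq]; exact hgmb0)
    rcases hrung c0 hc0 with h | ⟨μ, s, hμ1, hspos, hμM, hsval, E2⟩
    · exact hcase h
    have h2 := E2 M c0
    rw [if_neg (fun h => hμM h.1.symm), if_pos ⟨rfl, rfl⟩] at h2
    have hfMc0 : f M c0 = 0 := by omega
    have h3 := E1 M c0
    rw [if_neg (fun h => hc0b0 h.2), if_neg (fun h => hc0b0 h.2)] at h3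
    rw [hMeq] at hc0 hfMc0 h3
    omega
  · -- M < m
    obtain ⟨c, hc⟩ := hflev M (by omega) (by omega)
    have hgMc : g M c ≠ 0 := by
      by_cases hcb : c = b0
      · subst hcb
        by_cases hMm1 : M = m1
        · subst hMm1; omega
        · have h1 := E1 M c
          rw [if_neg (fun h => hMm1 h.1), if_neg (fun h => (by omega : ¬ M = m) h.1)] at h1
          omega
      · have h1 := E1 M c
        rw [if_neg (fun h => hcb h.2), if_neg (fun h => hcb h.2)] at h1
        omega
    rcases hrung c hgMc with h | ⟨μ, s, hμ1, hspos, hμM, hsval, E2⟩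
    · exact hcase h
    have h2 := E2 M c
    rw [if_neg (fun h => hμM h.1.symm), if_pos ⟨rfl, rfl⟩] at h2
    omega

open Classical in
theorem combinatorial {L : Type v} (f g : ℕ → L → ℕ) (m M : ℕ)
    (hfm : ∀ n c, f n c ≠ 0 → n ≤ m)
    (hgM : ∀ n c, g n c ≠ 0 → n ≤ M)
    (hflev : ∀ n, 1 ≤ n → n ≤ m → ∃ c, f n c ≠ 0)
    (hglev : ∀ n, 1 ≤ n → n ≤ M → ∃ c, g n c ≠ 0)
    (hm : ∃ c, f m c ≠ 0)
    (hM : ∃ c, g M c ≠ 0)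
    (hrunf : ∀ b, f m b ≠ 0 → (∀ n c, f n c = g n c) ∨ ∃ m1 r, 1 ≤ m1 ∧ 0 < r ∧
      m1 ≠ m ∧ r = f m b ∧
      ∀ n c, f n c + (if n = m1 ∧ c = b then r else 0) =
        g n c + (if n = m ∧ c = b then r else 0))
    (hrung : ∀ b, g M b ≠ 0 → (∀ n c, f n c = g n c) ∨ ∃ μ s, 1 ≤ μ ∧ 0 < s ∧
      μ ≠ M ∧ s = g M b ∧
      ∀ n c, g n c + (if n = μ ∧ c = b then s else 0) =
        f n c + (if n = M ∧ c = b then s else 0)) :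
    ∀ n c, f n c = g n c := by
  rcases le_total M m with h | h
  · exact combinatorial_le f g m M h hgM hflev hm hM hrunf hrung
  · intro n c
    refine (combinatorial_le g f M m h hfm hglev hM hm ?_ ?_ n c).symm
    · intro b hb
      rcases hrung b hb with h' | ⟨μ, s, h1, h2, h3, h4, h5⟩
      · exact Or.inl (fun n c => (h' n c).symm)
      · exact Or.inr ⟨μ, s, h1, h2, h3, h4, h5⟩
    · intro b hb
      rcases hrunf b hb with h' | ⟨m1, r, h1, h2, h3, h4, h5⟩
      · exact Or.inl (fun n c => (h' n c).symm)
      · exact Or.inr ⟨m1, r, h1, h2, h3, h4, h5⟩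


theorem cnt_empty (𝒞 : CS E L) (n : ℕ) (c : L) : cnt 𝒞 (∅ : Set E) n c = 0 := by
  have h : {e ∈ (∅ : Set E) | depth 𝒞 ∅ e = n ∧ 𝒞.label e = c} = ∅ := by
    ext x; simp
  rw [cnt, h, Set.ncard_empty]

theorem cnt_mem (𝒞 : CS E L) {X : Set E} {n : ℕ} {c : L} (h : cnt 𝒞 X n c ≠ 0) :
    ∃ e ∈ X, depth 𝒞 X e = n ∧ 𝒞.label e = c := by
  obtain ⟨e, he⟩ := Set.nonempty_of_ncard_ne_zero h
  exact ⟨e, he.1, he.2⟩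

open Classical in
/-- the central lemma: configurations related by an RHESB have the same number
of events with any given label at any given depth. -/
theorem count_eq {E₁ E₂ : Type u} {L : Type v} (𝒞 : CS E₁ L) (𝒟 : CS E₂ L)
    (hst𝒞 : IsStable 𝒞) (hst𝒟 : IsStable 𝒟)
    (R : Set E₁ → Set E₂ → Prop) (hR : IsRHESB 𝒞 𝒟 R) :
    ∀ N (X : Set E₁) (Y : Set E₂), X.ncard = N → R X Y →
      ∀ n c, cnt 𝒞 X n c = cnt 𝒟 Y n c := by
  intro N
  induction N using Nat.strong_induction_on with
  | _ N IH =>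
    intro X Y hcard hRXY
    obtain ⟨hXC, hYC⟩ := hR.1.2 X Y hRXY
    have hmatchC := (hR.2 X Y hRXY).2.2.1
    have hmatchD := (hR.2 X Y hRXY).2.2.2
    have hmatchD' : ∀ A Y', Hom A → REqStep 𝒟 A Y Y' →
        ∃ X', REqStep 𝒞 A X X' ∧ (fun Y'' X'' => R X'' Y'') Y' X' := by
      intro A Y' h1 h2
      obtain ⟨X', h3, h4⟩ := hmatchD A Y' h1 h2
      exact ⟨X', h3, h4⟩
    rcases Set.eq_empty_or_nonempty X with hXe | hXne
    · subst hXe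
      rcases Set.eq_empty_or_nonempty Y with hYe | hYne
      · subst hYe; intro n c; rw [cnt_empty, cnt_empty]
      · exfalso
        obtain ⟨e0, he0, hmaxY⟩ := Set.exists_max_image Y (depth 𝒟 Y) (𝒟.finite Y hYC) hYne
        have hb : cnt 𝒟 Y (depth 𝒟 Y e0) (𝒟.label e0) ≠ 0 :=
          cnt_ne_zero 𝒟 hYC he0 rfl rfl
        obtain ⟨Y₁, X₁, m1, r, -, -, -, -, -, hrpos, -, -, -, eq2⟩ :=
          run 𝒟 𝒞 hst𝒟 hst𝒞 _ hYC hXC hmatchD' hmaxY hb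
        have h2 := eq2 m1 (𝒟.label e0)
        rw [cnt_empty, if_pos ⟨rfl, rfl⟩] at h2
        omega
    · obtain ⟨e0, he0, hmaxX⟩ := Set.exists_max_image X (depth 𝒞 X) (𝒞.finite X hXC) hXne
      set f := cnt 𝒞 X with hf
      set g := cnt 𝒟 Y with hg
      set m := depth 𝒞 X e0 with hmdef
      have hm : ∃ c, f m c ≠ 0 := ⟨𝒞.label e0, cnt_ne_zero 𝒞 hXC he0 rfl rfl⟩
      have hfm : ∀ n c, f n c ≠ 0 → n ≤ m := by
        intro n c h
        obtain ⟨e, he, hdep, -⟩ := cnt_mem 𝒞 h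
        exact hdep ▸ hmaxX e he
      have hflev : ∀ n, 1 ≤ n → n ≤ m → ∃ c, f n c ≠ 0 := by
        intro n h1 h2
        obtain ⟨d, hd, hdd⟩ := level_nonempty 𝒞 hst𝒞 hXC m e0 he0 rfl n h1 h2
        exact ⟨𝒞.label d, cnt_ne_zero 𝒞 hXC hd hdd rfl⟩
      have hrunf : ∀ b, f m b ≠ 0 → (∀ n c, f n c = g n c) ∨ ∃ m1 r, 1 ≤ m1 ∧ 0 < r ∧
          m1 ≠ m ∧ r = f m b ∧
          ∀ n c, f n c + (if n = m1 ∧ c = b then r else 0) =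
            g n c + (if n = m ∧ c = b then r else 0) := by
        intro b hb
        obtain ⟨X₁, Y₁, m1, r, hS, -, -, hncX, -, hrpos, hrval, hm11, eqC, eqD⟩ :=
          run 𝒞 𝒟 hst𝒞 hst𝒟 R hXC hYC hmatchC hmaxX hb
        have hIH := IH X₁.ncard (hcard ▸ hncX) X₁ Y₁ rfl hS
        by_cases hm1m : m1 = m
        · left
          intro n c
          rw [hf, hg, eqC n c, eqD n c, hIH n c, hm1m]
        · right
          refine ⟨m1, r, hm11, hrpos, hm1m, hrval, fun n c => ?_⟩
          rw [hf, hg, eqC n c, eqD n c, hIH n c]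
          ring
      by_cases hfg : ∀ n c, f n c = g n c
      · exact hfg
      have hYne : Y.Nonempty := by
        obtain ⟨b0, hb0⟩ := hm
        rcases hrunf b0 hb0 with h | ⟨m1, r, -, hrpos, hm1m, -, E1⟩
        · exact absurd h hfg
        · have h1 := E1 m1 b0
          rw [if_pos ⟨rfl, rfl⟩, if_neg (fun h => hm1m h.1)] at h1
          have : g m1 b0 ≠ 0 := by omega
          obtain ⟨e, he, -⟩ := cnt_mem 𝒟 this
          exact ⟨e, he⟩
      obtain ⟨e1, he1, hmaxY⟩ := Set.exists_max_image Y (depth 𝒟 Y) (𝒟.finite Y hYC) hYne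
      set M := depth 𝒟 Y e1 with hMdef
      have hM : ∃ c, g M c ≠ 0 := ⟨𝒟.label e1, cnt_ne_zero 𝒟 hYC he1 rfl rfl⟩
      have hgM : ∀ n c, g n c ≠ 0 → n ≤ M := by
        intro n c h
        obtain ⟨e, he, hdep, -⟩ := cnt_mem 𝒟 h
        exact hdep ▸ hmaxY e he
      have hglev : ∀ n, 1 ≤ n → n ≤ M → ∃ c, g n c ≠ 0 := by
        intro n h1 h2
        obtain ⟨d, hd, hdd⟩ := level_nonempty 𝒟 hst𝒟 hYC M e1 he1 rfl n h1 h2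
        exact ⟨𝒟.label d, cnt_ne_zero 𝒟 hYC hd hdd rfl⟩
      have hrung : ∀ b, g M b ≠ 0 → (∀ n c, f n c = g n c) ∨ ∃ μ s, 1 ≤ μ ∧ 0 < s ∧
          μ ≠ M ∧ s = g M b ∧
          ∀ n c, g n c + (if n = μ ∧ c = b then s else 0) =
            f n c + (if n = M ∧ c = b then s else 0) := by
        intro b hb
        obtain ⟨Y₂, X₂, μ, s, hS, -, -, -, hncX₂, hspos, hsval, hμ1, eqD₂, eqC₂⟩ :=
          run 𝒟 𝒞 hst𝒟 hst𝒞 _ hYC hXC hmatchD' hmaxY hb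
        have hIH := IH X₂.ncard (hcard ▸ hncX₂) X₂ Y₂ rfl hS
        by_cases hμM : μ = M
        · left
          intro n c
          rw [hf, hg, eqC₂ n c, eqD₂ n c, hIH n c, hμM]
        · right
          refine ⟨μ, s, hμ1, hspos, hμM, hsval, fun n c => ?_⟩
          rw [hf, hg, eqC₂ n c, eqD₂ n c, hIH n c]
          ring
      exact combinatorial f g m M hfm hgM hflev hglev hm hM hrunf hrung

end CS

end Aux

/-- an RHESB matches single-event transitions on depth. -/
theorem stmt15 {E₁ E₂ : Type u} {L : Type v} (𝒞 : CS E₁ L) (𝒟 : CS E₂ L)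
    (h𝒞 : IsStable 𝒞) (h𝒟 : IsStable 𝒟)
    (R : Set E₁ → Set E₂ → Prop) (hR : IsRHESB 𝒞 𝒟 R)
    (X X' : Set E₁) (Y Y' : Set E₂) (a : L) (k k' : ℕ)
    (hX : FTransD 𝒞 a k X X') (hY : FTransD 𝒟 a k' Y Y')
    (h1 : R X Y) (h2 : R X' Y') :
    k = k' := by
  classical
  obtain ⟨hXC, hX'C, hsub, e, hdiff, hlab, hdep⟩ := hX
  obtain ⟨hYC, hY'C, hsubY, f, hdiffY, hlabY, hdepY⟩ := hY
  have H1 := count_eq 𝒞 𝒟 h𝒞 h𝒟 R hR X.ncard X Y rfl h1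
  have H2 := count_eq 𝒞 𝒟 h𝒞 h𝒟 R hR X'.ncard X' Y' rfl h2
  have hdX : ∀ e' ∈ X' \ X, depth 𝒞 X' e' = k ∧ 𝒞.label e' = a := by
    intro e' he'
    rw [hdiff, Set.mem_singleton_iff] at he'
    subst he'
    exact ⟨hdep, hlab⟩
  have hdY : ∀ f' ∈ Y' \ Y, depth 𝒟 Y' f' = k' ∧ 𝒟.label f' = a := by
    intro f' hf'
    rw [hdiffY, Set.mem_singleton_iff] at hf'
    subst hf'
    exact ⟨hdepY, hlabY⟩
  have s1 := cnt_split 𝒞 h𝒞 hXC hX'C hsub hdX k a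
  rw [hdiff, Set.ncard_singleton, if_pos ⟨rfl, rfl⟩] at s1
  have s2 := cnt_split 𝒟 h𝒟 hYC hY'C hsubY hdY k a
  rw [hdiffY, Set.ncard_singleton] at s2
  by_contra hkk
  rw [if_neg (fun h => hkk h.1)] at s2
  have e1 := H1 k a
  have e2 := H2 k a
  omega
end
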